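/- arXiv:2008.06850 — 4 statements merged into one kernel-verified Lean document; each statement's English description precedes it below -/
import Mathlib

section
/- Let A be a real m×m matrix and let λ ∈ ℝ be such that every complex eigenvalue μ of A satisfies Re μ ≤ λ. Then for every ε > 0 there exists a constant C > 0 such that ‖e^{tA}‖ ≤ C·e^{(λ+ε)t} for all t ≥ 0. -/
open Matrix

/-- Matrix exponential of a real square matrix. -/
noncomputable def mexp {m : ℕ} (M : Matrix (Fin m) (Fin m) ℝ) : Matrix (Fin m) (Fin m) ℝ :=
  NormedSpace.exp M

/-- Frobenius norm of a real square matrix. -/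
noncomputable def fnorm {m : ℕ} (M : Matrix (Fin m) (Fin m) ℝ) : ℝ :=
  Real.sqrt (∑ i, ∑ j, (M i j) ^ 2)

/-- Euclidean norm of a vector in ℝ^m. -/
noncomputable def vnorm {m : ℕ} (x : Fin m → ℝ) : ℝ :=
  Real.sqrt (∑ i, (x i) ^ 2)

/-- Frobenius inner product ⟨M, N⟩ = trace(Mᵀ N). -/
def finner {m : ℕ} (M N : Matrix (Fin m) (Fin m) ℝ) : ℝ :=
  ∑ i, ∑ j, M i j * N i j

section SpectralBoundAux

open NormedSpace Filter
open scoped ENNReal NNReal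

attribute [local instance] Matrix.frobeniusSeminormedAddCommGroup Matrix.frobeniusNormedSpace
  Matrix.frobeniusNormedRing Matrix.frobeniusNormedAlgebra

variable {m : ℕ}

private lemma pow_mulVec_eig {B : Matrix (Fin m) (Fin m) ℂ} {v : Fin m → ℂ} {ν : ℂ}
    (h : B *ᵥ v = ν • v) (n : ℕ) : (B ^ n) *ᵥ v = ν ^ n • v := by
  induction n with
  | zero => simp
  | succ n ih =>
      rw [pow_succ', ← Matrix.mulVec_mulVec, ih, Matrix.mulVec_smul, h, pow_succ', smul_smul,
        mul_comm]

private lemma exp_mulVec_eig {B : Matrix (Fin m) (Fin m) ℂ} {v : Fin m → ℂ} {ν : ℂ}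
    (h : B *ᵥ v = ν • v) : (exp B) *ᵥ v = Complex.exp ν • v := by
  classical
  let l : Matrix (Fin m) (Fin m) ℂ →ₗ[ℂ] (Fin m → ℂ) :=
    { toFun := fun M => M *ᵥ v
      map_add' := fun M N => Matrix.add_mulVec M N v
      map_smul' := fun c M => Matrix.smul_mulVec c M v }
  have hcont : Continuous l := l.continuous_of_finiteDimensional
  have hsum : Summable (fun n : ℕ => (Nat.factorial n : ℂ)⁻¹ • B ^ n) := expSeries_summable' B
  have h1 : (exp B) *ᵥ v = ∑' n : ℕ, ((Nat.factorial n : ℂ)⁻¹ • B ^ n) *ᵥ v := by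
    have := hsum.hasSum.mapL (LinearMap.toContinuousLinearMap l)
    rw [exp_eq_tsum ℂ]
    exact (this.tsum_eq).symm
  have h2 : ∀ n : ℕ, ((Nat.factorial n : ℂ)⁻¹ • B ^ n) *ᵥ v
      = ((Nat.factorial n : ℂ)⁻¹ * ν ^ n) • v := by
    intro n
    rw [Matrix.smul_mulVec, pow_mulVec_eig h, smul_smul]
  rw [h1]
  simp_rw [h2]
  rw [Summable.tsum_smul_const]
  · congr 1
    rw [Complex.exp_eq_exp_ℂ, exp_eq_tsum ℂ]
    simp [smul_eq_mul]
  · have := expSeries_summable' (𝕂 := ℂ) ν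
    simpa [smul_eq_mul] using this

private lemma eig_vec_of_mem_spectrum {B : Matrix (Fin m) (Fin m) ℂ} {μ : ℂ}
    (hμ : μ ∈ spectrum ℂ B) : ∃ v ≠ 0, B *ᵥ v = μ • v := by
  classical
  rw [spectrum.mem_iff] at hμ
  rw [Matrix.isUnit_iff_isUnit_det, isUnit_iff_ne_zero, not_not] at hμ
  obtain ⟨v, hv, hv0⟩ := Matrix.exists_mulVec_eq_zero_iff.mpr hμ
  refine ⟨v, hv, ?_⟩
  have : (algebraMap ℂ (Matrix (Fin m) (Fin m) ℂ) μ - B) *ᵥ v = μ • v - B *ᵥ v := by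
    rw [Matrix.sub_mulVec, Algebra.algebraMap_eq_smul_one, Matrix.smul_mulVec,
      Matrix.one_mulVec]
  rw [this] at hv0
  exact (sub_eq_zero.mp hv0).symm

private lemma mem_spectrum_of_eig_vec {B : Matrix (Fin m) (Fin m) ℂ} {ν : ℂ} {v : Fin m → ℂ}
    (hv : v ≠ 0) (h : B *ᵥ v = ν • v) : ν ∈ spectrum ℂ B := by
  classical
  rw [spectrum.mem_iff, Matrix.isUnit_iff_isUnit_det, isUnit_iff_ne_zero, not_not]
  rw [← Matrix.exists_mulVec_eq_zero_iff]
  refine ⟨v, hv, ?_⟩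
  rw [Matrix.sub_mulVec, Algebra.algebraMap_eq_smul_one, Matrix.smul_mulVec,
    Matrix.one_mulVec, h, sub_self]

/-- Spectral mapping (one inclusion) for the matrix exponential. -/
private lemma spectrum_exp_subset (B : Matrix (Fin m) (Fin m) ℂ) {μ : ℂ}
    (hμ : μ ∈ spectrum ℂ (exp B)) : ∃ ν ∈ spectrum ℂ B, μ = Complex.exp ν := by
  classical
  obtain ⟨v, hv, hBv⟩ := eig_vec_of_mem_spectrum hμ
  set E : Submodule ℂ (Fin m → ℂ) := Module.End.eigenspace (Matrix.mulVecLin (exp B)) μ with hE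
  have hvE : v ∈ E := by
    rw [hE, Module.End.mem_eigenspace_iff, Matrix.mulVecLin_apply, hBv]
  have hcomm : Commute (exp B) B := Commute.exp_left (Commute.refl B)
  have hstab : ∀ x ∈ E, Matrix.mulVecLin B x ∈ E := by
    intro x hx
    simp only [hE, Module.End.mem_eigenspace_iff, Matrix.mulVecLin_apply] at hx ⊢
    rw [Matrix.mulVec_mulVec, hcomm.eq, ← Matrix.mulVec_mulVec, hx, Matrix.mulVec_smul]
  haveI : Nontrivial ↥E := nontrivial_of_ne ⟨v, hvE⟩ 0 (fun hc => hv (congrArg Subtype.val hc))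
  let g' : Module.End ℂ ↥E := (Matrix.mulVecLin B).restrict hstab
  obtain ⟨ν, hν⟩ := Module.End.exists_eigenvalue g'
  obtain ⟨w, hw⟩ := hν.exists_hasEigenvector
  have hw0 : (w : Fin m → ℂ) ≠ 0 := fun hc => hw.2 (Subtype.ext hc)
  have hBw : B *ᵥ (w : Fin m → ℂ) = ν • (w : Fin m → ℂ) := by
    have := hw.apply_eq_smul
    have h2 := congrArg (Subtype.val) this
    simpa [g', LinearMap.restrict_apply, Matrix.mulVecLin_apply] using h2
  have hwE : (exp B) *ᵥ (w : Fin m → ℂ) = μ • (w : Fin m → ℂ) := by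
    have h3 := w.2
    simp only [hE, Module.End.mem_eigenspace_iff, Matrix.mulVecLin_apply] at h3
    exact h3
  have hexp := exp_mulVec_eig hBw
  refine ⟨ν, mem_spectrum_of_eig_vec hw0 hBw, ?_⟩
  obtain ⟨i, hi⟩ := Function.ne_iff.mp hw0
  have : μ * (w : Fin m → ℂ) i = Complex.exp ν * (w : Fin m → ℂ) i := by
    have := hwE.symm.trans hexp
    have := congrFun this i
    simpa using this
  exact mul_right_cancel₀ hi this

private lemma spectralRadius_exp_le (B : Matrix (Fin m) (Fin m) ℂ) (lam : ℝ)
    (hspec : ∀ μ ∈ spectrum ℂ B, μ.re ≤ lam) :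
    spectralRadius ℂ (exp B) ≤ ENNReal.ofReal (Real.exp lam) := by
  rw [spectralRadius]
  refine iSup₂_le fun μ hμ => ?_
  obtain ⟨ν, hν, rfl⟩ := spectrum_exp_subset B hμ
  have h1 : ‖Complex.exp ν‖ = Real.exp ν.re := by
    rw [Complex.norm_exp]
  calc (‖Complex.exp ν‖₊ : ℝ≥0∞) = ENNReal.ofReal ‖Complex.exp ν‖ :=
        (ofReal_norm _).symm
    _ ≤ ENNReal.ofReal (Real.exp lam) := by
        refine ENNReal.ofReal_le_ofReal ?_
        rw [h1]
        exact Real.exp_le_exp.mpr (hspec ν hν)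

private lemma pow_norm_growth (a : Matrix (Fin m) (Fin m) ℂ) {r : ℝ}
    (hr : spectralRadius ℂ a < ENNReal.ofReal r) :
    ∃ c : ℝ, 1 ≤ c ∧ ∀ n : ℕ, ‖a ^ n‖ ≤ c * r ^ n := by
  classical
  have hr0 : 0 < r := by
    by_contra hc
    rw [ENNReal.ofReal_eq_zero.mpr (le_of_not_gt hc)] at hr
    exact (not_lt_of_ge zero_le) hr
  have h := spectrum.pow_norm_pow_one_div_tendsto_nhds_spectralRadius a
  have hev : ∀ᶠ n : ℕ in atTop,
      ENNReal.ofReal (‖a ^ n‖ ^ (1 / (n:ℝ))) < ENNReal.ofReal r :=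
    h.eventually_lt_const hr
  have hev2 : ∀ᶠ n : ℕ in atTop, ‖a ^ n‖ ≤ r ^ n := by
    filter_upwards [hev, eventually_ge_atTop 1] with n hn hn1
    have hlt : ‖a ^ n‖ ^ (1 / (n:ℝ)) < r := (ENNReal.ofReal_lt_ofReal_iff hr0).mp hn
    have hx : (0:ℝ) ≤ ‖a ^ n‖ := norm_nonneg _
    have hn0 : (n:ℝ) ≠ 0 := by positivity
    have key : ‖a ^ n‖ = (‖a ^ n‖ ^ (1 / (n:ℝ))) ^ n := by
      rw [← Real.rpow_natCast (‖a ^ n‖ ^ (1 / (n:ℝ))) n, ← Real.rpow_mul hx,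
        one_div_mul_cancel hn0, Real.rpow_one]
    rw [key]
    exact le_of_lt (pow_lt_pow_left₀ hlt (Real.rpow_nonneg hx _) (by omega))
  obtain ⟨N, hN⟩ := eventually_atTop.mp hev2
  refine ⟨1 + ∑ k ∈ Finset.range N, ‖a ^ k‖ / r ^ k, ?_, ?_⟩
  · have : (0:ℝ) ≤ ∑ k ∈ Finset.range N, ‖a ^ k‖ / r ^ k :=
      Finset.sum_nonneg fun k _ => div_nonneg (norm_nonneg _) (pow_nonneg hr0.le _)
    linarith
  · intro n
    by_cases hn : N ≤ n
    · have h1 := hN n hn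
      have h2 : (1:ℝ) ≤ 1 + ∑ k ∈ Finset.range N, ‖a ^ k‖ / r ^ k := by
        have : (0:ℝ) ≤ ∑ k ∈ Finset.range N, ‖a ^ k‖ / r ^ k :=
          Finset.sum_nonneg fun k _ => div_nonneg (norm_nonneg _) (pow_nonneg hr0.le _)
        linarith
      calc ‖a ^ n‖ ≤ r ^ n := h1
        _ ≤ (1 + ∑ k ∈ Finset.range N, ‖a ^ k‖ / r ^ k) * r ^ n :=
          le_mul_of_one_le_left (pow_nonneg hr0.le _) h2
    · push_neg at hn
      have h1 : ‖a ^ n‖ / r ^ n ≤ ∑ k ∈ Finset.range N, ‖a ^ k‖ / r ^ k :=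
        Finset.single_le_sum (f := fun k => ‖a ^ k‖ / r ^ k)
          (fun k _ => div_nonneg (norm_nonneg _) (pow_nonneg hr0.le _))
          (Finset.mem_range.mpr hn)
      have h2 : ‖a ^ n‖ / r ^ n ≤ 1 + ∑ k ∈ Finset.range N, ‖a ^ k‖ / r ^ k := by linarith
      rw [div_le_iff₀ (pow_pos hr0 n)] at h2
      exact h2

private lemma main_bound (B : Matrix (Fin m) (Fin m) ℂ) (lam : ℝ)
    (hspec : ∀ μ ∈ spectrum ℂ B, μ.re ≤ lam) {ε : ℝ} (hε : 0 < ε) :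
    ∃ C : ℝ, 0 < C ∧ ∀ t : ℝ, 0 ≤ t → ‖exp (t • B)‖ ≤ C * Real.exp ((lam + ε) * t) := by
  classical
  set r : ℝ := Real.exp (lam + ε) with hr_def
  have hrad : spectralRadius ℂ (exp B) < ENNReal.ofReal r := by
    refine lt_of_le_of_lt (spectralRadius_exp_le B lam hspec) ?_
    rw [ENNReal.ofReal_lt_ofReal_iff (Real.exp_pos _)]
    exact Real.exp_lt_exp.mpr (by linarith)
  obtain ⟨c, hc1, hc⟩ := pow_norm_growth (exp B) hrad
  have hcont : Continuous fun s : ℝ => ‖exp (s • B)‖ := by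
    have h1 : Continuous fun s : ℝ => s • B := continuous_id.smul continuous_const
    exact (exp_continuous.comp h1).norm
  obtain ⟨s₀, hs₀, hKmax⟩ := (isCompact_Icc (a := (0:ℝ)) (b := 1)).exists_isMaxOn
    ⟨0, by norm_num⟩ hcont.continuousOn
  have hK : ∀ x ∈ Set.Icc (0:ℝ) 1, ‖exp (x • B)‖ ≤ ‖exp (s₀ • B)‖ := fun x hx => hKmax hx
  set K : ℝ := ‖exp (s₀ • B)‖ with hK_def
  have hK0 : 0 ≤ K := norm_nonneg _
  refine ⟨c * K * Real.exp |lam + ε| + 1, by positivity, fun t ht => ?_⟩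
  set n : ℕ := ⌊t⌋₊ with hn_def
  set s : ℝ := t - n with hs_def
  have hs0 : 0 ≤ s := sub_nonneg.mpr (Nat.floor_le ht)
  have hs1 : s ≤ 1 := by
    have := Nat.lt_floor_add_one t
    simp only [hs_def]
    linarith
  have hsplit : exp (t • B) = (exp B) ^ n * exp (s • B) := by
    have h1 : t • B = (n : ℝ) • B + s • B := by
      rw [← add_smul]
      congr 1
      simp [hs_def]
    rw [h1, Matrix.exp_add_of_commute _ _ (((Commute.refl B).smul_left (n : ℝ)).smul_right s),
      Nat.cast_smul_eq_nsmul, Matrix.exp_nsmul]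
  have hnorm1 : ‖exp (t • B)‖ ≤ (c * r ^ n) * K := by
    rw [hsplit]
    calc ‖(exp B) ^ n * exp (s • B)‖ ≤ ‖(exp B) ^ n‖ * ‖exp (s • B)‖ := norm_mul_le _ _
      _ ≤ (c * r ^ n) * K := by
          refine mul_le_mul (hc n) (hK s ⟨hs0, hs1⟩) (norm_nonneg _) ?_
          positivity
  have hrn : r ^ n ≤ Real.exp |lam + ε| * Real.exp ((lam + ε) * t) := by
    rw [hr_def, ← Real.exp_nat_mul, ← Real.exp_add]
    refine Real.exp_le_exp.mpr ?_
    have habs : (lam + ε) * ((n : ℝ) - t) ≤ |lam + ε| := by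
      calc (lam + ε) * ((n : ℝ) - t) ≤ |(lam + ε) * ((n : ℝ) - t)| := le_abs_self _
        _ = |lam + ε| * |(n : ℝ) - t| := abs_mul _ _
        _ ≤ |lam + ε| := mul_le_of_le_one_right (abs_nonneg _)
            (by rw [abs_le]; constructor <;> [linarith; linarith])
    nlinarith [habs]
  calc ‖exp (t • B)‖ ≤ (c * r ^ n) * K := hnorm1
    _ ≤ c * (Real.exp |lam + ε| * Real.exp ((lam + ε) * t)) * K := by
        have hcpos : (0:ℝ) < c := lt_of_lt_of_le one_pos hc1
        have := mul_le_mul_of_nonneg_left hrn hcpos.le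
        nlinarith [this, hK0]
    _ = (c * K * Real.exp |lam + ε|) * Real.exp ((lam + ε) * t) := by ring
    _ ≤ (c * K * Real.exp |lam + ε| + 1) * Real.exp ((lam + ε) * t) := by
        have := Real.exp_pos ((lam + ε) * t)
        nlinarith

private lemma mexp_eq (M : Matrix (Fin m) (Fin m) ℝ) : mexp M = exp M := rfl

private lemma complexify_exp (X : Matrix (Fin m) (Fin m) ℝ) :
    (exp X).map (Complex.ofReal) = exp (X.map Complex.ofReal) := by
  classical
  let l : Matrix (Fin m) (Fin m) ℝ →ₗ[ℝ] Matrix (Fin m) (Fin m) ℂ :=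
    { toFun := fun M => M.map Complex.ofReal
      map_add' := fun M N => by ext i j; simp
      map_smul' := fun c M => by ext i j; simp [Complex.real_smul] }
  have hcont : Continuous
      (Complex.ofRealHom.mapMatrix : Matrix (Fin m) (Fin m) ℝ →+* Matrix (Fin m) (Fin m) ℂ) :=
    l.continuous_of_finiteDimensional
  have h1 := map_exp
    (Complex.ofRealHom.mapMatrix : Matrix (Fin m) (Fin m) ℝ →+* Matrix (Fin m) (Fin m) ℂ)
    hcont X
  have h2 : (exp (X.map Complex.ofReal) : Matrix (Fin m) (Fin m) ℂ)
      = exp (X.map Complex.ofReal) := by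
    rfl
  simp only [RingHom.mapMatrix_apply] at h1
  rw [← h2]
  exact h1

private lemma fnorm_eq (M : Matrix (Fin m) (Fin m) ℝ) : fnorm M = ‖M‖ := by
  rw [fnorm, Matrix.frobenius_norm_def, Real.sqrt_eq_rpow]
  congr 1
  refine Finset.sum_congr rfl fun i _ => Finset.sum_congr rfl fun j _ => ?_
  rw [show (2:ℝ) = ((2:ℕ):ℝ) by norm_num, Real.rpow_natCast, Real.norm_eq_abs, sq_abs]

private lemma smul_map (t : ℝ) (A : Matrix (Fin m) (Fin m) ℝ) :
    (t • A).map Complex.ofReal = t • (A.map Complex.ofReal) := by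
  ext i j
  simp [Complex.real_smul]

private lemma glue (t : ℝ) (A : Matrix (Fin m) (Fin m) ℝ) :
    fnorm (mexp (t • A)) = ‖exp (t • (A.map Complex.ofReal))‖ := by
  rw [mexp_eq, fnorm_eq,
    ← Matrix.frobenius_norm_map_eq (exp (t • A)) Complex.ofReal (fun a => Complex.norm_real a),
    complexify_exp, smul_map]

end SpectralBoundAux

/-- If every complex eigenvalue μ of the real matrix A satisfies Re μ ≤ λ,
then for every ε > 0 there is C > 0 with ‖e^{tA}‖ ≤ C·e^{(λ+ε)t} for all t ≥ 0. -/
theorem stmt0 {m : ℕ} (A : Matrix (Fin m) (Fin m) ℝ) (lam : ℝ)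
    (hspec : ∀ μ ∈ spectrum ℂ (A.map Complex.ofReal), μ.re ≤ lam) :
    ∀ ε : ℝ, 0 < ε → ∃ C : ℝ, 0 < C ∧
      ∀ t : ℝ, 0 ≤ t → fnorm (mexp (t • A)) ≤ C * Real.exp ((lam + ε) * t) := by
  intro ε hε
  obtain ⟨C, hC, hbound⟩ := main_bound (A.map Complex.ofReal) lam hspec hε
  refine ⟨C, hC, fun t ht => ?_⟩
  rw [glue t A]
  exact hbound t ht
end

section
/- Let A be a real m×m matrix all of whose entries are nonnegative, and let r = r(A) be its spectral radius (the maximum of |μ| over all complex eigenvalues μ of A). Then r is an eigenvalue of A, and every complex eigenvalue μ of A with μ ≠ r satisfies Re μ < r. In particular, A is Perron-like with principal eigenvalue s(A) = r(A). -/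
open Filter

section Aux1
attribute [local instance] Matrix.linftyOpNormedAddCommGroup Matrix.linftyOpNormedRing
  Matrix.linftyOpNormedAlgebra

lemma aux_pow_bound {m : ℕ} (A : Matrix (Fin m) (Fin m) ℝ) (r s : ℝ) (hr0 : 0 ≤ r)
    (hr : ∀ μ ∈ spectrum ℂ (A.map Complex.ofReal), ‖μ‖ ≤ r)
    (hs : r < s) :
    ∃ C : ℝ, 0 < C ∧ ∀ (k : ℕ) (i j : Fin m), |(A ^ k) i j| ≤ C * s ^ k := by
  have hs0 : 0 < s := lt_of_le_of_lt hr0 hs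
  set M := A.map Complex.ofReal with hM
  haveI : CompleteSpace (Matrix (Fin m) (Fin m) ℂ) :=
    FiniteDimensional.complete ℂ _
  -- spectral radius bound
  have hρ : spectralRadius ℂ M ≤ ENNReal.ofReal r := by
    rw [spectralRadius]
    refine iSup₂_le fun μ hμ => ?_
    rw [← enorm_eq_nnnorm, ← ofReal_norm]
    exact ENNReal.ofReal_le_ofReal (hr μ hμ)
  have hgel := spectrum.pow_norm_pow_one_div_tendsto_nhds_spectralRadius M
  have hev : ∀ᶠ n : ℕ in atTop, ENNReal.ofReal (‖M ^ n‖ ^ (1 / (n:ℕ) : ℝ)) < ENNReal.ofReal s :=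
    hgel.eventually_lt_const (lt_of_le_of_lt hρ (by exact_mod_cast ENNReal.ofReal_lt_ofReal_iff hs0 |>.mpr hs))
  obtain ⟨N, hN⟩ := (hev.and (eventually_ge_atTop 1)).exists_forall_of_atTop
  -- for n ≥ N, ‖M^n‖ ≤ s^n
  have hbig : ∀ n, N ≤ n → ‖M ^ n‖ ≤ s ^ n := by
    intro n hn
    obtain ⟨h1, h2⟩ := hN n hn
    have hn0 : (0:ℝ) < (n:ℝ) := by exact_mod_cast h2
    have h1' : ‖M ^ n‖ ^ (1 / (n:ℕ) : ℝ) < s :=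
      (ENNReal.ofReal_lt_ofReal_iff hs0).mp h1
    have h3 := Real.rpow_lt_rpow (Real.rpow_nonneg (norm_nonneg _) _) h1' hn0
    have e : (‖M ^ n‖ ^ (1 / (n:ℕ) : ℝ)) ^ ((n:ℕ):ℝ) = ‖M ^ n‖ := by
      rw [← Real.rpow_mul (norm_nonneg _), one_div, inv_mul_cancel₀ (ne_of_gt hn0), Real.rpow_one]
    rw [e, Real.rpow_natCast] at h3
    exact h3.le
  -- entry bound
  have hentry : ∀ (X : Matrix (Fin m) (Fin m) ℝ) (i j : Fin m), |X i j| ≤ ‖X.map Complex.ofReal‖ := by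
    intro X i j
    have h1 : ‖(X.map Complex.ofReal) i j‖₊ ≤ ‖X.map Complex.ofReal‖₊ := by
      rw [Matrix.linfty_opNNNorm_def]
      refine le_trans ?_ (Finset.le_sup (Finset.mem_univ i))
      exact Finset.single_le_sum (f := fun j' => ‖(X.map Complex.ofReal) i j'‖₊)
        (fun _ _ => zero_le) (Finset.mem_univ j)
    have h2 : ‖(X.map Complex.ofReal) i j‖ = |X i j| := by
      simp [Matrix.map_apply, Complex.norm_real, Real.norm_eq_abs]
    rw [← h2]
    exact_mod_cast h1
  have hmap : ∀ k : ℕ, M ^ k = (A ^ k).map Complex.ofReal := by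
    intro k
    have : M = Complex.ofRealHom.mapMatrix A := rfl
    rw [this, ← map_pow]
    rfl
  refine ⟨1 + ∑ k ∈ Finset.range N, ‖M ^ k‖ / s ^ k, by positivity, fun k i j => ?_⟩
  rcases le_or_gt N k with hk | hk
  · calc |(A ^ k) i j| ≤ ‖M ^ k‖ := by rw [hmap k] at *; exact hentry _ i j
      _ ≤ s ^ k := hbig k hk
      _ ≤ (1 + ∑ k ∈ Finset.range N, ‖M ^ k‖ / s ^ k) * s ^ k := by
          refine le_mul_of_one_le_left (by positivity) ?_
          refine le_add_of_le_of_nonneg le_rfl ?_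
          exact Finset.sum_nonneg fun _ _ => by positivity
  · calc |(A ^ k) i j| ≤ ‖M ^ k‖ := by rw [hmap k] at *; exact hentry _ i j
      _ = (‖M ^ k‖ / s ^ k) * s ^ k := by field_simp
      _ ≤ (1 + ∑ k ∈ Finset.range N, ‖M ^ k‖ / s ^ k) * s ^ k := by
          refine mul_le_mul_of_nonneg_right ?_ (by positivity)
          refine le_add_of_nonneg_of_le zero_le_one ?_
          exact Finset.single_le_sum (f := fun k => ‖M ^ k‖ / s ^ k)
            (fun _ _ => by positivity) (Finset.mem_range.mpr hk)
end Aux1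


lemma aux_pow_nonneg {m : ℕ} (A : Matrix (Fin m) (Fin m) ℝ) (hA : ∀ i j, 0 ≤ A i j) :
    ∀ (k : ℕ) (i j : Fin m), 0 ≤ (A ^ k) i j := by
  intro k
  induction k with
  | zero => intro i j; rw [pow_zero]; by_cases h : i = j <;> simp [Matrix.one_apply, h]
  | succ k ih =>
    intro i j
    rw [pow_succ, Matrix.mul_apply]
    exact Finset.sum_nonneg fun l _ => mul_nonneg (ih i l) (hA l j)

lemma aux_geom {m : ℕ} (A : Matrix (Fin m) (Fin m) ℝ) (hA : ∀ i j, 0 ≤ A i j)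
    (C s t : ℝ) (hC : ∀ (k : ℕ) (i j : Fin m), |(A ^ k) i j| ≤ C * s ^ k)
    (hs : 0 ≤ s) (hst : s < t) :
    ∃ S : Matrix (Fin m) (Fin m) ℝ, (∀ i j, 0 ≤ S i j) ∧ (t • 1 - A) * S = 1 := by
  have ht0 : 0 < t := lt_of_le_of_lt hs hst
  have hg : ∀ i j : Fin m, Summable fun k : ℕ => t⁻¹ ^ k * (A ^ k) i j := by
    intro i j
    refine Summable.of_nonneg_of_le
      (fun k => mul_nonneg (pow_nonneg (inv_nonneg.mpr ht0.le) k) (aux_pow_nonneg A hA k i j))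
      (fun k => ?_)
      (((summable_geometric_of_lt_one (by positivity) ((div_lt_one ht0).mpr hst)).mul_left C))
    have : t⁻¹ ^ k * (A ^ k) i j ≤ t⁻¹ ^ k * (C * s ^ k) := by
      refine mul_le_mul_of_nonneg_left ?_ (by positivity)
      exact (le_abs_self _).trans (hC k i j)
    calc t⁻¹ ^ k * (A ^ k) i j ≤ t⁻¹ ^ k * (C * s ^ k) := this
      _ = C * (s / t) ^ k := by rw [div_pow, inv_pow]; field_simp
  set g : Fin m → Fin m → ℕ → ℝ := fun i j k => t⁻¹ ^ k * (A ^ k) i j with hgdef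
  set S : Matrix (Fin m) (Fin m) ℝ := Matrix.of fun i j => t⁻¹ * ∑' k, g i j k with hS
  refine ⟨S, fun i j => mul_nonneg (inv_nonneg.mpr ht0.le)
    (tsum_nonneg fun k => mul_nonneg (pow_nonneg (inv_nonneg.mpr ht0.le) k)
      (aux_pow_nonneg A hA k i j)), ?_⟩
  ext i j
  rw [Matrix.mul_apply]
  -- each term: (t•1-A) i l * S l j = ∑' k, ((t•1-A) i l * t⁻¹) * g l j k
  have hterm : ∀ l : Fin m, (t • 1 - A : Matrix (Fin m) (Fin m) ℝ) i l * S l j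
      = ∑' k, ((t • 1 - A : Matrix (Fin m) (Fin m) ℝ) i l * t⁻¹) * g l j k := by
    intro l
    rw [hS]
    simp only [Matrix.of_apply]
    rw [← tsum_mul_left, ← tsum_mul_left]
    congr 1; ext k; ring
  rw [Finset.sum_congr rfl fun l _ => hterm l]
  rw [← Summable.tsum_finsetSum (fun l _ => Summable.mul_left _ (hg l j))]
  -- inner sum equals g i j k - g i j (k+1)
  have hinner : ∀ k : ℕ, (∑ l, ((t • 1 - A : Matrix (Fin m) (Fin m) ℝ) i l * t⁻¹) * g l j k)
      = g i j k - g i j (k + 1) := by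
    intro k
    have e1 : (∑ l, ((t • 1 - A : Matrix (Fin m) (Fin m) ℝ) i l * t⁻¹) * g l j k)
        = t⁻¹ ^ (k+1) * ∑ l, (t • 1 - A : Matrix (Fin m) (Fin m) ℝ) i l * (A ^ k) l j := by
      rw [Finset.mul_sum]
      congr 1; ext l; rw [hgdef]; simp only; rw [pow_succ]; ring
    rw [e1, ← Matrix.mul_apply]
    have e2 : (t • 1 - A : Matrix (Fin m) (Fin m) ℝ) * A ^ k = t • A ^ k - A ^ (k+1) := by
      rw [sub_mul, Matrix.smul_mul, one_mul, pow_succ']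
    rw [e2]
    simp only [Matrix.sub_apply, Matrix.smul_apply, smul_eq_mul]
    rw [hgdef]
    simp only
    rw [pow_succ]
    field_simp
  rw [tsum_congr hinner]
  -- telescoping
  have h1 : Summable (g i j) := hg i j
  have h2 : Summable fun k => g i j (k + 1) := by
    exact (summable_nat_add_iff 1).mpr h1
  rw [Summable.tsum_sub h1 h2, Summable.tsum_eq_zero_add h1]
  have hg0 : g i j 0 = (1 : Matrix (Fin m) (Fin m) ℝ) i j := by
    simp [hgdef, Matrix.one_apply]
  rw [hg0]
  ring


/-- If A is an m×m real matrix (m ≥ 1) with nonnegative entries and spectral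
radius r, then r is an eigenvalue of A and every complex eigenvalue μ ≠ r satisfies
Re μ < r; i.e. A is Perron-like with principal eigenvalue r. -/
theorem stmt4 {m : ℕ} (hm : 0 < m) (A : Matrix (Fin m) (Fin m) ℝ)
    (hA : ∀ i j, 0 ≤ A i j) (r : ℝ)
    (hr : IsGreatest {x : ℝ | ∃ μ ∈ spectrum ℂ (A.map Complex.ofReal), x = ‖μ‖} r) :
    r ∈ spectrum ℝ A ∧
      ∀ μ ∈ spectrum ℂ (A.map Complex.ofReal), μ ≠ (r : ℂ) → μ.re < r := by
  obtain ⟨μ₀, hμ₀, hrabs⟩ := hr.1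
  have hub : ∀ μ ∈ spectrum ℂ (A.map Complex.ofReal), ‖μ‖ ≤ r :=
    fun μ hμ => hr.2 ⟨μ, hμ, rfl⟩
  have hr0 : 0 ≤ r := hrabs ▸ norm_nonneg μ₀
  -- Part 2
  have part2 : ∀ μ ∈ spectrum ℂ (A.map Complex.ofReal), μ ≠ (r : ℂ) → μ.re < r := by
    intro μ hμ hne
    have habs : ‖μ‖ ≤ r := hub μ hμ
    have hre : μ.re ≤ ‖μ‖ := Complex.re_le_norm μ
    rcases lt_or_ge μ.re r with h | h
    · exact h
    · exfalso
      have h1 : μ.re = r := le_antisymm (hre.trans habs) h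
      have h2 : ‖μ‖ = r := le_antisymm habs (h1 ▸ hre)
      have him : μ.im = 0 := by
        have e1 := Complex.sq_norm μ
        rw [Complex.normSq_apply, h2, h1] at e1
        nlinarith
      exact hne (Complex.ext (by simp [h1]) (by simp [him]))
  refine ⟨?_, part2⟩
  -- eigenvector for μ₀
  have hdet : (algebraMap ℂ (Matrix (Fin m) (Fin m) ℂ) μ₀ - A.map Complex.ofReal).det = 0 := by
    by_contra hd
    exact (spectrum.mem_iff.mp hμ₀) ((Matrix.isUnit_iff_isUnit_det _).mpr (isUnit_iff_ne_zero.mpr hd))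
  obtain ⟨v, hv0, hv⟩ := (Matrix.exists_mulVec_eq_zero_iff).mpr hdet
  have hMv : (A.map Complex.ofReal).mulVec v = μ₀ • v := by
    rw [Matrix.sub_mulVec] at hv
    have h2 : (algebraMap ℂ (Matrix (Fin m) (Fin m) ℂ) μ₀).mulVec v = μ₀ • v := by
      rw [Algebra.algebraMap_eq_smul_one, Matrix.smul_mulVec, Matrix.one_mulVec]
    rw [h2] at hv
    exact (sub_eq_zero.mp hv).symm
  set w : Fin m → ℝ := fun i => ‖v i‖ with hw
  have hw0 : ∀ i, 0 ≤ w i := fun i => norm_nonneg _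
  obtain ⟨i₀, hi₀⟩ : ∃ i, v i ≠ 0 := by
    by_contra hc
    push_neg at hc
    exact hv0 (funext hc)
  have hwpos : 0 < w i₀ := norm_pos_iff.mpr hi₀
  -- subinvariance
  have hw_sub : ∀ i, r * w i ≤ A.mulVec w i := by
    intro i
    have e1 : r * w i = ‖(A.map Complex.ofReal).mulVec v i‖ := by
      rw [hMv]
      simp only [Pi.smul_apply, smul_eq_mul, norm_mul]
      rw [hrabs]
    rw [e1, Matrix.mulVec, dotProduct]
    refine le_trans (norm_sum_le _ _) ?_
    rw [Matrix.mulVec, dotProduct]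
    refine le_of_eq (Finset.sum_congr rfl fun j _ => ?_)
    rw [norm_mul, Matrix.map_apply, Complex.norm_real, Real.norm_eq_abs, abs_of_nonneg (hA i j)]
  -- now prove r ∈ spectrum ℝ A by contradiction
  rw [spectrum.mem_iff]
  intro hu
  have hdetr : (r • (1 : Matrix (Fin m) (Fin m) ℝ) - A).det ≠ 0 := by
    rw [← Algebra.algebraMap_eq_smul_one]
    exact isUnit_iff_ne_zero.mp ((Matrix.isUnit_iff_isUnit_det _).mp hu)
  -- key inequality for t > r
  have key : ∀ t, r < t → ∀ i,
      w i ≤ (t - r) * ((t • (1 : Matrix (Fin m) (Fin m) ℝ) - A)⁻¹.mulVec w) i := by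
    intro t ht i
    set s : ℝ := (r + t) / 2 with hs
    have hrs : r < s := by rw [hs]; linarith
    have hst : s < t := by rw [hs]; linarith
    have hs0 : 0 ≤ s := le_of_lt (lt_of_le_of_lt hr0 hrs)
    obtain ⟨C, hC0, hC⟩ := aux_pow_bound A r s hr0 hub hrs
    obtain ⟨S, hSpos, hSinv⟩ := aux_geom A hA C s t hC hs0 hst
    have hSl : S * (t • 1 - A) = 1 := mul_eq_one_comm.mp hSinv
    have hinv : (t • (1 : Matrix (Fin m) (Fin m) ℝ) - A)⁻¹ = S := Matrix.inv_eq_right_inv hSinv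
    rw [hinv]
    have hw_eq : S.mulVec ((t • (1 : Matrix (Fin m) (Fin m) ℝ) - A).mulVec w) = w := by
      rw [Matrix.mulVec_mulVec, hSl, Matrix.one_mulVec]
    have hle : ∀ l, ((t • (1 : Matrix (Fin m) (Fin m) ℝ) - A).mulVec w) l ≤ (t - r) * w l := by
      intro l
      rw [Matrix.sub_mulVec]
      have e : ((t • (1 : Matrix (Fin m) (Fin m) ℝ)).mulVec w) l = t * w l := by
        rw [Matrix.smul_mulVec, Matrix.one_mulVec]; rfl
      simp only [Pi.sub_apply, e]
      have := hw_sub l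
      linarith
    calc w i = (S.mulVec ((t • (1 : Matrix (Fin m) (Fin m) ℝ) - A).mulVec w)) i :=
          (congrFun hw_eq i).symm
      _ ≤ ∑ l, S i l * ((t - r) * w l) := by
          rw [Matrix.mulVec, dotProduct]
          exact Finset.sum_le_sum fun l _ =>
            mul_le_mul_of_nonneg_left (hle l) (hSpos i l)
      _ = (t - r) * (S.mulVec w) i := by
          rw [Matrix.mulVec, dotProduct, Finset.mul_sum]
          exact Finset.sum_congr rfl fun l _ => by ring
  -- continuity of resolvent entry at r
  set B : ℝ → Matrix (Fin m) (Fin m) ℝ := fun t => t • 1 - A with hB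
  have hBc : Continuous B := by
    rw [hB]
    exact (continuous_id.smul continuous_const).sub continuous_const
  set φ : ℝ → ℝ := fun t => (t - r) * ∑ j, ((B t).det⁻¹ * (B t).adjugate i₀ j) * w j with hφ
  have hφeq : ∀ t, (t - r) * (((B t)⁻¹).mulVec w) i₀ = φ t := by
    intro t
    rw [hφ]
    simp only
    congr 1
    rw [Matrix.inv_def, Matrix.mulVec, dotProduct]
    refine Finset.sum_congr rfl fun j _ => ?_
    rw [Matrix.smul_apply, smul_eq_mul, Ring.inverse_eq_inv']
  have hφcont : ContinuousAt φ r := by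
    refine (continuousAt_id.sub continuousAt_const).mul ?_
    refine tendsto_finset_sum _ fun j _ => ?_
    refine ContinuousAt.mul ?_ continuousAt_const
    refine ContinuousAt.mul ?_ ?_
    · exact ((hBc.matrix_det).continuousAt).inv₀ hdetr
    · exact ((hBc.matrix_adjugate).matrix_elem i₀ j).continuousAt
  have hφr : φ r = 0 := by rw [hφ]; simp
  have htend : Tendsto φ (nhdsWithin r (Set.Ioi r)) (nhds 0) := by
    rw [← hφr]
    exact (hφcont.continuousWithinAt).tendsto
  have hwle : w i₀ ≤ 0 := by
    refine ge_of_tendsto htend ?_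
    refine eventually_nhdsWithin_of_forall fun t ht => ?_
    rw [← hφeq t]
    exact key t ht i₀
  linarith
end

section
/- Let A be a real m×m matrix all of whose off-diagonal entries are nonnegative, and let a ∈ ℝ be such that A + aI has all entries nonnegative. Then the real number s := r(A + aI) − a, where r denotes spectral radius, is an eigenvalue of A, and every complex eigenvalue μ of A with μ ≠ s satisfies Re μ < s. In particular, A is Perron-like with principal eigenvalue s. -/
open Matrix Filter
open scoped Topology NNReal

variable {m : ℕ}

attribute [local instance] Matrix.linftyOpNormedRing Matrix.linftyOpNormedAlgebra

noncomputable local instance : CompleteSpace (Matrix (Fin m) (Fin m) ℂ) :=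
  FiniteDimensional.complete ℂ _

theorem entry_le (x : Matrix (Fin m) (Fin m) ℂ) (i j : Fin m) : ‖x i j‖ ≤ ‖x‖ := by
  have h1 : ‖x i j‖₊ ≤ ∑ j', ‖x i j'‖₊ :=
    Finset.single_le_sum (f := fun j' => ‖x i j'‖₊) (fun _ _ => zero_le) (Finset.mem_univ j)
  have h2 : (∑ j', ‖x i j'‖₊) ≤ ‖x‖₊ := by
    rw [Matrix.linfty_opNNNorm_def]
    exact Finset.le_sup (f := fun i => ∑ j', ‖x i j'‖₊) (Finset.mem_univ i)
  exact_mod_cast h1.trans h2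

theorem norm_le_entries (x : Matrix (Fin m) (Fin m) ℂ) : ‖x‖ ≤ ∑ i, ∑ j, ‖x i j‖ := by
  have h : ‖x‖₊ ≤ ∑ i, ∑ j, ‖x i j‖₊ := by
    rw [Matrix.linfty_opNNNorm_def]
    exact Finset.sup_le fun i _ =>
      Finset.single_le_sum (f := fun i => ∑ j, ‖x i j‖₊) (fun _ _ => zero_le) (Finset.mem_univ i)
  calc ‖x‖ = ((‖x‖₊ : ℝ≥0) : ℝ) := rfl
    _ ≤ ((∑ i, ∑ j, ‖x i j‖₊ : ℝ≥0) : ℝ) := by exact_mod_cast h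
    _ = ∑ i, ∑ j, ‖x i j‖ := by push_cast; rfl

theorem unit_of_summable (M : Matrix (Fin m) (Fin m) ℂ) (z : ℂ) (hz : z ≠ 0)
    (h : Summable fun k : ℕ => ‖(z⁻¹) ^ (k + 1) • M ^ k‖) :
    IsUnit (algebraMap ℂ (Matrix (Fin m) (Fin m) ℂ) z - M) ∧
      (algebraMap ℂ (Matrix (Fin m) (Fin m) ℂ) z - M) * (∑' k : ℕ, (z⁻¹) ^ (k + 1) • M ^ k) = 1 := by
  set X : Matrix (Fin m) (Fin m) ℂ := algebraMap ℂ _ z - M with hX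
  have hsum : Summable fun k : ℕ => (z⁻¹) ^ (k + 1) • M ^ k := Summable.of_norm h
  set S : Matrix (Fin m) (Fin m) ℂ := ∑' k : ℕ, (z⁻¹) ^ (k + 1) • M ^ k with hS
  set P : ℕ → Matrix (Fin m) (Fin m) ℂ := fun n => ∑ k ∈ Finset.range n, (z⁻¹) ^ (k + 1) • M ^ k with hP
  have hzz : ∀ n : ℕ, (z⁻¹) ^ (n + 1) * z = (z⁻¹) ^ n := by
    intro n; rw [pow_succ, mul_assoc, inv_mul_cancel₀ hz, mul_one]
  have key : ∀ n, X * P n = 1 - (z⁻¹) ^ n • M ^ n := by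
    intro n
    induction n with
    | zero => simp [hP]
    | succ n ih =>
      have hPs : P (n + 1) = P n + (z⁻¹) ^ (n + 1) • M ^ n := by
        simp [hP, Finset.sum_range_succ]
      rw [hPs, mul_add, ih]
      have : X * ((z⁻¹) ^ (n + 1) • M ^ n)
          = ((z⁻¹) ^ (n + 1) * z) • M ^ n - (z⁻¹) ^ (n + 1) • M ^ (n + 1) := by
        rw [hX, sub_mul, Algebra.algebraMap_eq_smul_one, smul_mul_assoc, one_mul,
          mul_smul_comm, smul_smul, mul_comm z, pow_succ, ← pow_succ']
      rw [this, hzz]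
      abel
  have hcomm : ∀ n, Commute X (P n) := by
    intro n
    refine Commute.sum_right _ _ _ fun k _ => ?_
    have c1 : Commute (algebraMap ℂ (Matrix (Fin m) (Fin m) ℂ) z) (M ^ k) := Algebra.commutes z (M ^ k)
    exact (c1.sub_left ((Commute.refl M).pow_right k)).smul_right _
  have hterm : Tendsto (fun n : ℕ => (z⁻¹) ^ n • M ^ n) atTop (𝓝 0) := by
    have h0 : Tendsto (fun k : ℕ => (z⁻¹) ^ (k + 1) • M ^ k) atTop (𝓝 0) := h.of_norm.tendsto_atTop_zero
    have hzz2 : (fun k : ℕ => z • ((z⁻¹) ^ (k + 1) • M ^ k)) = fun k : ℕ => (z⁻¹) ^ k • M ^ k := by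
      funext k
      rw [smul_smul, mul_comm, hzz]
    have h1 := h0.const_smul z
    rw [smul_zero, hzz2] at h1
    exact h1
  have hPS : Tendsto P atTop (𝓝 S) := hsum.hasSum.tendsto_sum_nat
  have hXS : X * S = 1 := by
    have h1 : Tendsto (fun n => X * P n) atTop (𝓝 (X * S)) := hPS.const_mul X
    have h2 : Tendsto (fun n => X * P n) atTop (𝓝 1) := by
      simp only [key]
      simpa using tendsto_const_nhds.sub hterm
    exact tendsto_nhds_unique h1 h2
  have hSX : S * X = 1 := by
    have h1 : Tendsto (fun n => P n * X) atTop (𝓝 (S * X)) := hPS.mul_const X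
    have h2 : Tendsto (fun n => P n * X) atTop (𝓝 1) := by
      have : ∀ n, P n * X = X * P n := fun n => (hcomm n).symm.eq
      simp only [this, key]
      simpa using tendsto_const_nhds.sub hterm
    exact tendsto_nhds_unique h1 h2
  exact ⟨⟨⟨X, S, hXS, hSX⟩, rfl⟩, hXS⟩

/-- Perron: the spectral radius of an entrywise-nonnegative matrix is an eigenvalue. -/
theorem perron_aux (hm : 0 < m) (B : Matrix (Fin m) (Fin m) ℝ)
    (hB : ∀ i j, 0 ≤ B i j) (r : ℝ)
    (hr : IsGreatest
      {x : ℝ | ∃ μ ∈ spectrum ℂ (B.map Complex.ofReal), x = ‖μ‖} r) :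
    (r : ℂ) ∈ spectrum ℂ (B.map Complex.ofReal) := by
  set Bc : Matrix (Fin m) (Fin m) ℂ := B.map Complex.ofReal with hBc
  obtain ⟨μ₀, hμ₀, hμ₀r⟩ := hr.1
  have hr0 : 0 ≤ r := hμ₀r ▸ (norm_nonneg μ₀)
  rcases hr0.eq_or_lt with h0 | hrpos
  · have : μ₀ = 0 := by
      rw [← norm_eq_zero, ← hμ₀r, ← h0]
    rw [show ((r : ℂ)) = μ₀ by rw [this, ← h0]; simp]
    exact hμ₀
  by_contra hcon
  -- entrywise facts about powers
  have hpow : ∀ (k : ℕ) i j, 0 ≤ (B ^ k) i j := by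
    intro k
    induction k with
    | zero => intro i j; by_cases hij : i = j <;> simp [pow_zero, Matrix.one_apply, hij]
    | succ k ih =>
      intro i j
      rw [pow_succ, Matrix.mul_apply]
      exact Finset.sum_nonneg fun l _ => mul_nonneg (ih i l) (hB l j)
  have hmapk : ∀ k : ℕ, Bc ^ k = (B ^ k).map Complex.ofReal := by
    intro k
    exact (map_pow (Complex.ofRealHom.mapMatrix) B k).symm
  have hentry : ∀ (k : ℕ) i j, ‖(Bc ^ k) i j‖ = (B ^ k) i j := by
    intro k i j
    rw [hmapk k]
    show ‖(((B ^ k) i j : ℝ) : ℂ)‖ = _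
    rw [Complex.norm_real, Real.norm_eq_abs, abs_of_nonneg (hpow k i j)]
  -- spectral radius identification
  have hsp : spectralRadius ℂ Bc = ENNReal.ofReal r := by
    apply le_antisymm
    · refine iSup₂_le fun μ hμ => ?_
      have hle : ‖μ‖ ≤ r := by
        exact hr.2 ⟨μ, hμ, rfl⟩
      rw [← enorm_eq_nnnorm, ← ofReal_norm]
      exact ENNReal.ofReal_le_ofReal hle
    · have h1 : ENNReal.ofReal r = (‖μ₀‖₊ : ENNReal) := by
        rw [← enorm_eq_nnnorm, ← ofReal_norm, hμ₀r]
      rw [h1]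
      exact le_iSup₂ (f := fun (k : ℂ) (_ : k ∈ spectrum ℂ Bc) => (‖k‖₊ : ENNReal)) μ₀ hμ₀
  -- Gelfand-based summability for t > r
  have hsumt : ∀ t : ℝ, r < t → Summable (fun k : ℕ => (t⁻¹) ^ (k + 1) * ‖Bc ^ k‖) := by
    intro t ht
    have ht0 : 0 < t := hrpos.trans ht
    set c : ℝ := (r + t) / 2 with hc
    have hrc : r < c := by rw [hc]; linarith
    have hct : c < t := by rw [hc]; linarith
    have hc0 : 0 < c := hrpos.trans hrc
    have hev : ∀ᶠ n : ℕ in atTop, ‖Bc ^ n‖ ≤ c ^ n := by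
      have hG := spectrum.pow_nnnorm_pow_one_div_tendsto_nhds_spectralRadius Bc
      rw [hsp] at hG
      have hlt : ENNReal.ofReal r < ENNReal.ofReal c := by
        exact ENNReal.ofReal_lt_ofReal_iff_of_nonneg hr0 |>.mpr hrc
      filter_upwards [hG.eventually_lt_const hlt, eventually_ge_atTop 1] with n hn hn1
      have hne : (n : ℕ) ≠ 0 := by omega
      have h2 : ((‖Bc ^ n‖₊ : ENNReal) ^ ((1:ℝ) / n)) ^ (n : ℕ) ≤ (ENNReal.ofReal c) ^ (n : ℕ) :=
        pow_le_pow_left' hn.le n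
      rw [one_div, ← ENNReal.rpow_natCast ((‖Bc ^ n‖₊ : ENNReal) ^ ((n:ℝ))⁻¹), ← ENNReal.rpow_mul,
        inv_mul_cancel₀ (by exact_mod_cast hne), ENNReal.rpow_one] at h2
      have h3 : (‖Bc ^ n‖₊ : ENNReal) ≤ ENNReal.ofReal (c ^ n) := by
        rwa [ENNReal.ofReal_pow hc0.le]
      have h4 : ‖Bc ^ n‖ ≤ c ^ n := by
        have := ENNReal.toReal_mono (by simp) h3
        simpa [ENNReal.toReal_ofReal (pow_nonneg hc0.le n)] using this
      exact h4
    refine summable_of_isBigO_nat (summable_geometric_of_lt_one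
      (by positivity) ((div_lt_one ht0).mpr hct)) ?_
    rw [Asymptotics.isBigO_iff]
    refine ⟨t⁻¹, ?_⟩
    filter_upwards [hev] with n hn
    have hnn : 0 ≤ (t⁻¹) ^ (n + 1) * ‖Bc ^ n‖ := by positivity
    rw [Real.norm_eq_abs, abs_of_nonneg hnn, Real.norm_eq_abs, abs_of_nonneg (by positivity)]
    calc (t⁻¹) ^ (n + 1) * ‖Bc ^ n‖ ≤ (t⁻¹) ^ (n + 1) * c ^ n := by
          exact mul_le_mul_of_nonneg_left hn (by positivity)
      _ = t⁻¹ * (c / t) ^ n := by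
          rw [div_eq_mul_inv, mul_pow, pow_succ]
          ring
  -- complex summability for real t > r
  have hsumC : ∀ t : ℝ, r < t → Summable fun k : ℕ => ‖((t:ℂ)⁻¹) ^ (k + 1) • Bc ^ k‖ := by
    intro t ht
    have ht0 : 0 < t := hrpos.trans ht
    have heq : (fun k : ℕ => ‖((t:ℂ)⁻¹) ^ (k + 1) • Bc ^ k‖)
        = fun k : ℕ => (t⁻¹) ^ (k + 1) * ‖Bc ^ k‖ := by
      funext k
      rw [norm_smul, norm_pow, norm_inv, Complex.norm_real, Real.norm_eq_abs, abs_of_pos ht0]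
    rw [heq]
    exact hsumt t ht
  -- resolvent set membership for all real t ≥ r
  have hres : ∀ t : ℝ, r ≤ t → (t : ℂ) ∈ resolventSet ℂ Bc := by
    intro t ht
    rcases eq_or_lt_of_le ht with h | hlt
    · have : ((t:ℝ):ℂ) = ((r:ℝ):ℂ) := by rw [← h]
      rw [this]
      exact Set.not_notMem.1 hcon
    · by_contra h
      have hmem : (t : ℂ) ∈ spectrum ℂ Bc := h
      have := hr.2 ⟨(t:ℂ), hmem, rfl⟩
      rw [Complex.norm_real, Real.norm_eq_abs, abs_of_pos (hrpos.trans hlt)] at this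
      linarith
  -- continuity bound near r
  have hcont : ContinuousAt (fun t : ℝ => resolvent Bc (t : ℂ)) r :=
    ((spectrum.hasDerivAt_resolvent (hres r le_rfl)).continuousAt).comp
      Complex.continuous_ofReal.continuousAt
  set Mb : ℝ := ‖resolvent Bc ((r : ℝ) : ℂ)‖ + 1 with hMb
  have hev2 : ∀ᶠ t : ℝ in 𝓝 r, ‖resolvent Bc (t : ℂ)‖ < Mb :=
    (hcont.norm).eventually_lt_const (lt_add_one _)
  obtain ⟨δ, δpos, hδ⟩ : ∃ δ > 0, ∀ t ∈ Set.Ioo r (r + δ), ‖resolvent Bc (t : ℂ)‖ ≤ Mb := by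
    obtain ⟨ε, εpos, hε⟩ := Metric.eventually_nhds_iff.mp hev2
    refine ⟨ε, εpos, fun t ht => le_of_lt (hε ?_)⟩
    rw [Real.dist_eq, abs_of_pos (by linarith [ht.1])]
    linarith [ht.2]
  -- resolvent equals the Neumann series for t > r
  have hS : ∀ t : ℝ, r < t → resolvent Bc (t : ℂ) = ∑' k : ℕ, ((t:ℂ)⁻¹) ^ (k + 1) • Bc ^ k := by
    intro t ht
    have ht0 : 0 < t := hrpos.trans ht
    have htne : ((t : ℝ) : ℂ) ≠ 0 := by
      simp only [ne_eq, Complex.ofReal_eq_zero]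
      exact ht0.ne'
    obtain ⟨hu, hmulr⟩ := unit_of_summable Bc (t : ℂ) htne (hsumC t ht)
    set X : Matrix (Fin m) (Fin m) ℂ := algebraMap ℂ _ ((t:ℝ):ℂ) - Bc with hX
    set S : Matrix (Fin m) (Fin m) ℂ := ∑' k : ℕ, ((t:ℂ)⁻¹) ^ (k + 1) • Bc ^ k with hS'
    calc resolvent Bc ((t:ℝ):ℂ) = Ring.inverse X := rfl
      _ = Ring.inverse X * (X * S) := by rw [hmulr, mul_one]
      _ = (Ring.inverse X * X) * S := (mul_assoc _ _ _).symm
      _ = S := by rw [Ring.inverse_mul_cancel _ hu, one_mul]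
  -- entry evaluation as continuous linear map
  have entry_tsum : ∀ t : ℝ, r < t → ∀ i j,
      Summable (fun k : ℕ => (t⁻¹) ^ (k + 1) * ((B ^ k) i j)) ∧
      (resolvent Bc (t : ℂ)) i j
        = ((∑' k : ℕ, (t⁻¹) ^ (k + 1) * ((B ^ k) i j) : ℝ) : ℂ) := by
    intro t ht i j
    have hsummA : Summable (fun k : ℕ => ((t:ℂ)⁻¹) ^ (k + 1) • Bc ^ k) := (hsumC t ht).of_norm
    let e : Matrix (Fin m) (Fin m) ℂ →ₗ[ℂ] ℂ :=
      { toFun := fun x => x i j, map_add' := fun _ _ => rfl, map_smul' := fun _ _ => rfl }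
    have he : Continuous e := by
      refine AddMonoidHomClass.continuous_of_bound e 1 fun x => ?_
      rw [one_mul]
      exact entry_le x i j
    have hterm : ∀ k : ℕ, (((t:ℂ)⁻¹) ^ (k + 1) • Bc ^ k) i j
        = (((t⁻¹) ^ (k + 1) * ((B ^ k) i j) : ℝ) : ℂ) := by
      intro k
      rw [Matrix.smul_apply, hmapk k, Matrix.map_apply, smul_eq_mul]
      push_cast
      ring
    have hsummE : Summable (fun k : ℕ => (((t:ℂ)⁻¹) ^ (k + 1) • Bc ^ k) i j) :=
      hsummA.map e.toAddMonoidHom he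
    have hsummE' : Summable (fun k : ℕ => (((t⁻¹) ^ (k + 1) * ((B ^ k) i j) : ℝ) : ℂ)) := by
      rw [← funext hterm]; exact hsummE
    have hsummR : Summable (fun k : ℕ => (t⁻¹) ^ (k + 1) * ((B ^ k) i j)) :=
      Complex.summable_ofReal.1 hsummE'
    constructor
    · exact hsummR
    · have h1 : (resolvent Bc (t : ℂ)) i j = ∑' k : ℕ, (((t:ℂ)⁻¹) ^ (k + 1) • Bc ^ k) i j := by
        rw [hS t ht]
        exact (ContinuousLinearMap.map_tsum ⟨e, he⟩ hsummA)
      rw [h1, funext hterm, ← Complex.ofReal_tsum]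
  -- partial sum bounds near r, then at r
  have hpartial : ∀ i j (n : ℕ), ∀ t ∈ Set.Ioo r (r + δ),
      ∑ k ∈ Finset.range n, (t⁻¹) ^ (k + 1) * ((B ^ k) i j) ≤ Mb := by
    intro i j n t ht
    obtain ⟨hsummR, hentryEq⟩ := entry_tsum t ht.1 i j
    have hnonneg : ∀ k : ℕ, 0 ≤ (t⁻¹) ^ (k + 1) * ((B ^ k) i j) := fun k =>
      mul_nonneg (pow_nonneg (inv_nonneg.2 (hrpos.trans ht.1).le) _) (hpow k i j)
    have h2 : ∑ k ∈ Finset.range n, (t⁻¹) ^ (k + 1) * ((B ^ k) i j)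
        ≤ ∑' k : ℕ, (t⁻¹) ^ (k + 1) * ((B ^ k) i j) :=
      hsummR.sum_le_tsum _ (fun k _ => hnonneg k)
    have h3 : (∑' k : ℕ, (t⁻¹) ^ (k + 1) * ((B ^ k) i j)) ≤ Mb := by
      calc (∑' k : ℕ, (t⁻¹) ^ (k + 1) * ((B ^ k) i j))
          ≤ |∑' k : ℕ, (t⁻¹) ^ (k + 1) * ((B ^ k) i j)| := le_abs_self _
        _ = ‖(resolvent Bc (t : ℂ)) i j‖ := by
            rw [hentryEq, Complex.norm_real, Real.norm_eq_abs]
        _ ≤ ‖resolvent Bc (t : ℂ)‖ := entry_le _ i j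
        _ ≤ Mb := hδ t ht
    linarith
  have hpr : ∀ i j (n : ℕ),
      ∑ k ∈ Finset.range n, (r⁻¹) ^ (k + 1) * ((B ^ k) i j) ≤ Mb := by
    intro i j n
    have hφ : ContinuousAt
        (fun t : ℝ => ∑ k ∈ Finset.range n, (t⁻¹) ^ (k + 1) * ((B ^ k) i j)) r := by
      exact tendsto_finset_sum _ fun k _ =>
        ((continuousAt_inv₀ hrpos.ne').pow (k + 1)).mul continuousAt_const
    have hlim : Tendsto (fun t : ℝ => ∑ k ∈ Finset.range n, (t⁻¹) ^ (k + 1) * ((B ^ k) i j))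
        (𝓝[>] r) (𝓝 (∑ k ∈ Finset.range n, (r⁻¹) ^ (k + 1) * ((B ^ k) i j))) :=
      (hφ.continuousWithinAt).tendsto
    refine le_of_tendsto hlim ?_
    filter_upwards [Ioo_mem_nhdsGT_of_mem ⟨le_refl r, lt_add_of_pos_right r δpos⟩] with t ht
    exact hpartial i j n t ht
  have hsumr : ∀ i j, Summable (fun k : ℕ => (r⁻¹) ^ (k + 1) * ((B ^ k) i j)) := fun i j =>
    summable_of_sum_range_le
      (fun k => mul_nonneg (pow_nonneg (inv_nonneg.2 hr0) _) (hpow k i j)) (hpr i j)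
  -- contradiction at μ₀
  have hz0 : μ₀ ≠ 0 := by
    intro h
    rw [h, norm_zero] at hμ₀r
    exact hrpos.ne' (hμ₀r ▸ rfl)
  have hfin : Summable (fun k : ℕ => ‖(μ₀⁻¹) ^ (k + 1) • Bc ^ k‖) := by
    have hb : ∀ k : ℕ, ‖(μ₀⁻¹) ^ (k + 1) • Bc ^ k‖
        ≤ ∑ i, ∑ j, (r⁻¹) ^ (k + 1) * ((B ^ k) i j) := by
      intro k
      have habs : ‖μ₀⁻¹‖ = r⁻¹ := by
        rw [norm_inv, ← hμ₀r]
      rw [norm_smul, norm_pow, habs]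
      calc (r⁻¹) ^ (k + 1) * ‖Bc ^ k‖
          ≤ (r⁻¹) ^ (k + 1) * ∑ i, ∑ j, ‖(Bc ^ k) i j‖ :=
            mul_le_mul_of_nonneg_left (norm_le_entries _)
              (pow_nonneg (inv_nonneg.2 hr0) _)
        _ = ∑ i, ∑ j, (r⁻¹) ^ (k + 1) * ((B ^ k) i j) := by
            simp only [Finset.mul_sum, hentry]
    refine Summable.of_nonneg_of_le (fun k => norm_nonneg _) hb ?_
    exact summable_sum fun i _ => summable_sum fun j _ => hsumr i j
  obtain ⟨hu, -⟩ := unit_of_summable Bc μ₀ hz0 hfin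
  rw [spectrum.mem_iff] at hμ₀
  exact hμ₀ hu

/-- If all off-diagonal entries of A are nonnegative and a ∈ ℝ is such that
A + aI has all entries nonnegative, then s := r(A + aI) − a is an eigenvalue of A and every
complex eigenvalue μ ≠ s of A satisfies Re μ < s; i.e. A is Perron-like with principal
eigenvalue s. -/
theorem stmt5 {m : ℕ} (hm : 0 < m) (A : Matrix (Fin m) (Fin m) ℝ)
    (hA : ∀ i j, i ≠ j → 0 ≤ A i j) (a : ℝ)
    (ha : ∀ i j, 0 ≤ (A + a • 1) i j) (r : ℝ)
    (hr : IsGreatest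
      {x : ℝ | ∃ μ ∈ spectrum ℂ ((A + a • 1).map Complex.ofReal), x = ‖μ‖} r) :
    (r - a) ∈ spectrum ℝ A ∧
      ∀ μ ∈ spectrum ℂ (A.map Complex.ofReal), μ ≠ ((r - a : ℝ) : ℂ) → μ.re < r - a := by
  set B : Matrix (Fin m) (Fin m) ℝ := A + a • 1 with hB
  set Ac : Matrix (Fin m) (Fin m) ℂ := A.map Complex.ofReal with hAc
  have hrs : (r : ℂ) ∈ spectrum ℂ (B.map Complex.ofReal) := perron_aux hm B ha r hr
  have hBcEq : B.map Complex.ofReal = Ac + (a : ℂ) • 1 := by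
    ext i j
    by_cases h : i = j <;>
      simp [hB, hAc, Matrix.map_apply, Matrix.add_apply, Matrix.smul_apply, Matrix.one_apply, h]
  have hshift : ∀ z : ℂ, z ∈ spectrum ℂ (Ac + (a : ℂ) • 1) ↔ z - a ∈ spectrum ℂ Ac := by
    intro z
    rw [spectrum.mem_iff, spectrum.mem_iff]
    have heq : algebraMap ℂ (Matrix (Fin m) (Fin m) ℂ) z - (Ac + (a : ℂ) • 1)
        = algebraMap ℂ (Matrix (Fin m) (Fin m) ℂ) (z - a) - Ac := by
      rw [map_sub, Algebra.algebraMap_eq_smul_one, Algebra.algebraMap_eq_smul_one]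
      abel
    rw [heq]
  have hcast : ((r : ℂ)) - (a : ℂ) = (((r - a : ℝ)) : ℂ) := by push_cast; ring
  have hmemC : (((r - a : ℝ)) : ℂ) ∈ spectrum ℂ Ac := by
    rw [← hcast, ← hshift, ← hBcEq]
    exact hrs
  have hreal : ∀ x : ℝ, ((x : ℂ)) ∈ spectrum ℂ Ac → x ∈ spectrum ℝ A := by
    intro x hx
    rw [spectrum.mem_iff] at hx ⊢
    intro hUnit
    apply hx
    rw [Matrix.isUnit_iff_isUnit_det] at hUnit ⊢
    have hmapEq : (algebraMap ℝ (Matrix (Fin m) (Fin m) ℝ) x - A).map Complex.ofReal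
        = algebraMap ℂ (Matrix (Fin m) (Fin m) ℂ) (x : ℂ) - Ac := by
      ext i j
      by_cases h : i = j <;>
        simp [hAc, Matrix.map_apply, Matrix.algebraMap_matrix_apply, h]
    have hdet : (algebraMap ℂ (Matrix (Fin m) (Fin m) ℂ) (x : ℂ) - Ac).det
        = (((algebraMap ℝ (Matrix (Fin m) (Fin m) ℝ) x - A).det : ℝ) : ℂ) := by
      rw [← hmapEq]
      exact (Complex.ofRealHom.map_det (algebraMap ℝ (Matrix (Fin m) (Fin m) ℝ) x - A)).symm
    rw [isUnit_iff_ne_zero] at hUnit ⊢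
    rw [hdet]
    exact_mod_cast hUnit
  refine ⟨hreal _ hmemC, ?_⟩
  intro μ hμ hμne
  by_contra hge'
  push_neg at hge'
  set z : ℂ := μ + (a : ℂ) with hz
  have hμB : z ∈ spectrum ℂ (B.map Complex.ofReal) := by
    rw [hBcEq, hshift]
    simpa [hz, add_sub_cancel_right] using hμ
  have h3 : ‖z‖ ≤ r := hr.2 ⟨z, hμB, rfl⟩
  have h2 : z.re ≤ ‖z‖ := Complex.re_le_norm z
  have h1 : r ≤ z.re := by
    have : z.re = μ.re + a := by simp [hz]
    linarith
  have h4 : z.re = ‖z‖ := by linarith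
  have h5 : ‖z‖ = r := by linarith
  have him : z.im = 0 := by
    have hsq := Complex.sq_norm z
    rw [Complex.normSq_apply] at hsq
    have h6 : z.re * z.re = ‖z‖ ^ 2 := by rw [h4]; ring
    have him2 : z.im * z.im = 0 := by linarith

    exact mul_self_eq_zero.mp him2
  have hzr : z = (r : ℂ) := by
    apply Complex.ext
    · rw [Complex.ofReal_re]; linarith
    · simp [him]
  apply hμne
  have : μ = (r : ℂ) - (a : ℂ) := by rw [← hzr, hz]; ring
  rw [this, hcast]
end

section
/- Let A be a real m×m matrix all of whose entries are nonnegative, and let r = r(A) be its spectral radius. Then r is an eigenvalue of A and, writing ν for the cyclic order of GE_r(A), the dominant eigenspace DE_r(A) = (A − rI)^{ν−1}(GE_r(A)) has a basis consisting of vectors all of whose coordinates are nonnegative. -/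
open Matrix

/-- The generalized eigenspace GE_s(A) = {x : (A - s•I)^k x = 0 for some k ≥ 1},
as a submodule of ℝ^m. -/
def GEsub {m : ℕ} (A : Matrix (Fin m) (Fin m) ℝ) (s : ℝ) : Submodule ℝ (Fin m → ℝ) where
  carrier := {x | ∃ k : ℕ, 1 ≤ k ∧ ((A - s • 1) ^ k).mulVec x = 0}
  zero_mem' := ⟨1, le_refl 1, Matrix.mulVec_zero _⟩
  add_mem' := by
    rintro a b ⟨k, hk, ha⟩ ⟨l, hl, hb⟩
    refine ⟨max k l, le_trans hk (le_max_left _ _), ?_⟩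
    have h1 : ((A - s • 1) ^ (max k l)).mulVec a = 0 := by
      have h : (A - s • 1) ^ (max k l) = (A - s • 1) ^ (max k l - k) * (A - s • 1) ^ k := by
        rw [← pow_add]; congr 1; omega
      rw [h, ← Matrix.mulVec_mulVec, ha, Matrix.mulVec_zero]
    have h2 : ((A - s • 1) ^ (max k l)).mulVec b = 0 := by
      have h : (A - s • 1) ^ (max k l) = (A - s • 1) ^ (max k l - l) * (A - s • 1) ^ l := by
        rw [← pow_add]; congr 1; omega
      rw [h, ← Matrix.mulVec_mulVec, hb, Matrix.mulVec_zero]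
    rw [Matrix.mulVec_add, h1, h2, add_zero]
  smul_mem' := by
    rintro c a ⟨k, hk, ha⟩
    exact ⟨k, hk, by rw [Matrix.mulVec_smul, ha, smul_zero]⟩


set_option synthInstance.maxHeartbeats 1000000
set_option maxHeartbeats 1000000

open Filter

attribute [local instance] Matrix.linftyOpNormedRing Matrix.linftyOpNormedAlgebra

namespace Stmt9Aux

variable {m : ℕ}





lemma pow_entry_nonneg (A : Matrix (Fin m) (Fin m) ℝ) (hA : ∀ i j, 0 ≤ A i j) :
    ∀ k i j, 0 ≤ (A ^ k) i j := by
  intro k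
  induction k with
  | zero => intro i j; simp [Matrix.one_apply]; positivity
  | succ n ih =>
    intro i j
    rw [pow_succ, Matrix.mul_apply]
    exact Finset.sum_nonneg fun l _ => mul_nonneg (ih i l) (hA l j)

lemma nnnorm_map_ofReal (B : Matrix (Fin m) (Fin m) ℝ) :
    ‖B.map (Complex.ofReal)‖₊ = ‖B‖₊ := by
  simp only [Matrix.linfty_opNNNorm_def, Matrix.map_apply]
  congr 1
  ext i
  simp [Complex.nnnorm_real]

lemma eventually_norm_pow_le (A : Matrix (Fin m) (Fin m) ℝ) (r q : ℝ)
    (hub : spectralRadius ℂ (A.map Complex.ofReal) ≤ ENNReal.ofReal r)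
    (hrq : r < q) (hq0 : 0 < q) :
    ∀ᶠ k in atTop, ‖A ^ k‖ ≤ q ^ k := by
  haveI : CompleteSpace (Matrix (Fin m) (Fin m) ℂ) := FiniteDimensional.complete ℂ _
  have hg := spectrum.pow_norm_pow_one_div_tendsto_nhds_spectralRadius (A.map Complex.ofReal)
  have hlt : spectralRadius ℂ (A.map Complex.ofReal) < ENNReal.ofReal q :=
    lt_of_le_of_lt hub (by exact_mod_cast ENNReal.ofReal_lt_ofReal_iff hq0 |>.mpr hrq)
  have hev := hg.eventually_lt_const hlt
  have hmap : ∀ k : ℕ, (A.map Complex.ofReal) ^ k = (A ^ k).map Complex.ofReal := by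
    intro k
    exact (map_pow (Complex.ofRealHom.mapMatrix) A k).symm
  filter_upwards [hev, eventually_ge_atTop 1] with k hk hk1
  have hnorm : ‖(A.map Complex.ofReal) ^ k‖ = ‖A ^ k‖ := by
    rw [hmap k]
    have := nnnorm_map_ofReal (A ^ k)
    calc ‖(A ^ k).map Complex.ofReal‖ = (‖(A ^ k).map Complex.ofReal‖₊ : ℝ) := rfl
      _ = (‖A ^ k‖₊ : ℝ) := by rw [this]
      _ = ‖A ^ k‖ := rfl
  rw [hnorm] at hk
  have hk' : ‖A ^ k‖ ^ (1 / (k : ℝ)) < q := by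
    have := (ENNReal.ofReal_lt_ofReal_iff hq0).mp hk
    exact this
  have hpos : (0:ℝ) < (k:ℝ) := by exact_mod_cast hk1
  have h1 : (‖A ^ k‖ ^ (1 / (k:ℝ))) ^ (k:ℝ) ≤ q ^ (k:ℝ) :=
    Real.rpow_le_rpow (Real.rpow_nonneg (norm_nonneg _) _) hk'.le (le_of_lt hpos)
  rw [← Real.rpow_natCast (q) k]
  calc ‖A ^ k‖ = (‖A ^ k‖ ^ (1 / (k:ℝ))) ^ (k:ℝ) := by
        rw [← Real.rpow_mul (norm_nonneg _), one_div,
          inv_mul_cancel₀ (ne_of_gt hpos), Real.rpow_one]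
    _ ≤ q ^ (k:ℝ) := h1







lemma one_sub_mul_tsum (x : Matrix (Fin m) (Fin m) ℝ) (hx : Summable (fun k => x ^ k)) :
    (1 - x) * (∑' k, x ^ k) = 1 ∧ (∑' k, x ^ k) * (1 - x) = 1 := by
  haveI : CompleteSpace (Matrix (Fin m) (Fin m) ℝ) := FiniteDimensional.complete ℝ _
  have hpow : Tendsto (fun n : ℕ => x ^ n) atTop (nhds 0) := hx.tendsto_atTop_zero
  have hlim : Tendsto (fun n : ℕ => 1 - x ^ n) atTop (nhds 1) := by
    simpa using (tendsto_const_nhds (x := (1 : Matrix (Fin m) (Fin m) ℝ))).sub hpow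
  have hsum : Tendsto (fun n : ℕ => ∑ k ∈ Finset.range n, x ^ k) atTop (nhds (∑' k, x ^ k)) :=
    hx.hasSum.tendsto_sum_nat
  constructor
  · have h1 : Tendsto (fun n : ℕ => (1 - x) * ∑ k ∈ Finset.range n, x ^ k) atTop
        (nhds ((1 - x) * ∑' k, x ^ k)) := hsum.const_mul _
    have h2 : (fun n : ℕ => (1 - x) * ∑ k ∈ Finset.range n, x ^ k)
        = fun n : ℕ => 1 - x ^ n := by
      funext n
      have := mul_geom_sum x n
      calc (1 - x) * ∑ k ∈ Finset.range n, x ^ k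
          = -((x - 1) * ∑ k ∈ Finset.range n, x ^ k) := by rw [← neg_sub x 1, neg_mul]
        _ = -(x ^ n - 1) := by rw [this]
        _ = 1 - x ^ n := neg_sub _ _
    rw [h2] at h1
    exact tendsto_nhds_unique h1 hlim
  · have h1 : Tendsto (fun n : ℕ => (∑ k ∈ Finset.range n, x ^ k) * (1 - x)) atTop
        (nhds ((∑' k, x ^ k) * (1 - x))) := hsum.mul_const _
    have h2 : (fun n : ℕ => (∑ k ∈ Finset.range n, x ^ k) * (1 - x))
        = fun n : ℕ => 1 - x ^ n := by
      funext n
      have := geom_sum_mul x n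
      calc (∑ k ∈ Finset.range n, x ^ k) * (1 - x)
          = -((∑ k ∈ Finset.range n, x ^ k) * (x - 1)) := by rw [← neg_sub x 1, mul_neg]
        _ = -(x ^ n - 1) := by rw [this]
        _ = 1 - x ^ n := neg_sub _ _
    rw [h2] at h1
    exact tendsto_nhds_unique h1 hlim







/-- entry evaluation as a continuous linear map -/
noncomputable def entryCLM (x : Fin m → ℝ) (i : Fin m) :
    Matrix (Fin m) (Fin m) ℝ →L[ℝ] ℝ :=
  LinearMap.toContinuousLinearMap
    { toFun := fun M => M.mulVec x i
      map_add' := by intro M N; simp [Matrix.add_mulVec]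
      map_smul' := by intro c M; simp [Matrix.smul_mulVec] }

lemma entryCLM_apply (x : Fin m → ℝ) (i : Fin m) (M : Matrix (Fin m) (Fin m) ℝ) :
    entryCLM x i M = M.mulVec x i := rfl

lemma mulVec_mono (A : Matrix (Fin m) (Fin m) ℝ) (hA : ∀ i j, 0 ≤ A i j)
    (u v : Fin m → ℝ) (huv : ∀ j, u j ≤ v j) (i : Fin m) :
    A.mulVec u i ≤ A.mulVec v i := by
  simp only [Matrix.mulVec, dotProduct]
  exact Finset.sum_le_sum fun j _ => mul_le_mul_of_nonneg_left (huv j) (hA i j)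

lemma iter_ge (A : Matrix (Fin m) (Fin m) ℝ) (hA : ∀ i j, 0 ≤ A i j) (r : ℝ) (hr0 : 0 ≤ r)
    (x : Fin m → ℝ) (hx : ∀ i, 0 ≤ x i) (hAx : ∀ i, r * x i ≤ A.mulVec x i) :
    ∀ k i, r ^ k * x i ≤ (A ^ k).mulVec x i := by
  intro k
  induction k with
  | zero => intro i; simp [Matrix.one_mulVec]
  | succ n ih =>
    intro i
    have h1 : (A ^ (n + 1)).mulVec x = A.mulVec ((A ^ n).mulVec x) := by
      rw [pow_succ', ← Matrix.mulVec_mulVec]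
    rw [h1]
    have h2 : A.mulVec (r ^ n • x) i ≤ A.mulVec ((A ^ n).mulVec x) i :=
      mulVec_mono A hA _ _ (fun j => by simpa using ih j) i
    have h3 : A.mulVec (r ^ n • x) i = r ^ n * A.mulVec x i := by
      rw [Matrix.mulVec_smul]; rfl
    calc r ^ (n + 1) * x i = r ^ n * (r * x i) := by ring
      _ ≤ r ^ n * A.mulVec x i :=
          mul_le_mul_of_nonneg_left (hAx i) (pow_nonneg hr0 n)
      _ = A.mulVec (r ^ n • x) i := h3.symm
      _ ≤ A.mulVec ((A ^ n).mulVec x) i := h2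







-- assume previous lemmas available (we'll concatenate); restate as axioms here for speed
lemma resolvent (A : Matrix (Fin m) (Fin m) ℝ) (hA : ∀ i j, 0 ≤ A i j) (r t : ℝ)
    (hr0 : 0 ≤ r) (hrt : r < t)
    (hub : spectralRadius ℂ (A.map Complex.ofReal) ≤ ENNReal.ofReal r) :
    ∃ S : Matrix (Fin m) (Fin m) ℝ,
      (t • 1 - A) * S = 1 ∧ S * (t • 1 - A) = 1 ∧ (∀ i j, 0 ≤ S i j) ∧
      ∀ x : Fin m → ℝ, (∀ i, 0 ≤ x i) → (∀ i, r * x i ≤ A.mulVec x i) →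
        ∀ i, x i * (t - r)⁻¹ ≤ S.mulVec x i := by
  have ht0 : 0 < t := lt_of_le_of_lt hr0 hrt
  set x0 : Matrix (Fin m) (Fin m) ℝ := t⁻¹ • A with hx0
  have hx0pow : ∀ k : ℕ, x0 ^ k = (t⁻¹) ^ k • A ^ k := fun k => smul_pow _ _ _
  set q : ℝ := (r + t) / 2 with hqdef
  have hq0 : 0 < q := by positivity
  have hrq : r < q := by rw [hqdef]; linarith
  have hqt : q < t := by rw [hqdef]; linarith
  have hsum : Summable (fun k => x0 ^ k) := by
    apply Summable.of_norm_bounded_eventually_nat (g := fun k => (q / t) ^ k)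
    · exact summable_geometric_of_lt_one (by positivity) (by rw [div_lt_one ht0]; exact hqt)
    · filter_upwards [eventually_norm_pow_le A r q hub hrq hq0] with k hk
      rw [hx0pow k, norm_smul]
      have : ‖(t⁻¹) ^ k‖ = (t⁻¹) ^ k := by
        rw [Real.norm_eq_abs, abs_pow, abs_of_pos (inv_pos.mpr ht0)]
      rw [this, div_pow, div_eq_mul_inv, ← inv_pow, mul_comm]
      exact mul_le_mul_of_nonneg_right hk (by positivity)
  set su := ∑' k, x0 ^ k with hsu
  obtain ⟨hl, hr'⟩ := one_sub_mul_tsum x0 hsum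
  refine ⟨t⁻¹ • su, ?_, ?_, ?_, ?_⟩
  · have h1 : t • ((1 : Matrix (Fin m) (Fin m) ℝ) - x0) = t • 1 - A := by
      rw [smul_sub, hx0, smul_smul, mul_inv_cancel₀ (ne_of_gt ht0), one_smul]
    rw [← h1, smul_mul_assoc, mul_smul_comm, smul_smul, mul_inv_cancel₀ (ne_of_gt ht0),
      one_smul, hl]
  · have h1 : t • ((1 : Matrix (Fin m) (Fin m) ℝ) - x0) = t • 1 - A := by
      rw [smul_sub, hx0, smul_smul, mul_inv_cancel₀ (ne_of_gt ht0), one_smul]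
    rw [← h1, mul_smul_comm, smul_mul_assoc, smul_smul, mul_inv_cancel₀ (ne_of_gt ht0),
      one_smul, hr']
  · intro i j
    have hentry : su i j = ∑' k, (x0 ^ k) i j := by
      have h := (entryCLM (Pi.single j 1) i).map_tsum hsum
      have he : ∀ M : Matrix (Fin m) (Fin m) ℝ, entryCLM (Pi.single j 1) i M = M i j := by
        intro M
        rw [entryCLM_apply, Matrix.mulVec_single]
        simp
      rw [hsu]
      calc (∑' k, x0 ^ k) i j = entryCLM (Pi.single j 1) i (∑' k, x0 ^ k) := (he _).symm
        _ = ∑' k, entryCLM (Pi.single j 1) i (x0 ^ k) := h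
        _ = ∑' k, (x0 ^ k) i j := by congr 1; funext k; exact he _
    have : (0:ℝ) ≤ su i j := by
      rw [hentry]
      apply tsum_nonneg
      intro k
      rw [hx0pow k]
      have : ((t⁻¹) ^ k • A ^ k) i j = (t⁻¹) ^ k * (A ^ k) i j := rfl
      rw [this]
      exact mul_nonneg (by positivity) (pow_entry_nonneg A hA k i j)
    have hS : (t⁻¹ • su) i j = t⁻¹ * su i j := rfl
    rw [hS]
    exact mul_nonneg (by positivity) this
  · intro x hx hAx i
    have hφ := (entryCLM x i).map_tsum hsum
    have hterm : ∀ k : ℕ, entryCLM x i (x0 ^ k) = (t⁻¹) ^ k * ((A ^ k).mulVec x i) := by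
      intro k
      rw [entryCLM_apply, hx0pow k, Matrix.smul_mulVec]
      rfl
    have hsummable_upper : Summable (fun k => entryCLM x i (x0 ^ k)) :=
      hsum.map (entryCLM x i).toLinearMap.toAddMonoidHom (entryCLM x i).continuous
    have hsummable_lower : Summable (fun k => (r / t) ^ k * x i) :=
      (summable_geometric_of_lt_one (by positivity)
        (by rw [div_lt_one ht0]; exact hrt)).mul_right _
    have hle : ∀ k : ℕ, (r / t) ^ k * x i ≤ entryCLM x i (x0 ^ k) := by
      intro k
      rw [hterm k]
      have := iter_ge A hA r hr0 x hx hAx k i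
      calc (r / t) ^ k * x i = (t⁻¹) ^ k * (r ^ k * x i) := by
            rw [div_pow]; ring
        _ ≤ (t⁻¹) ^ k * ((A ^ k).mulVec x i) :=
            mul_le_mul_of_nonneg_left this (by positivity)
    have htsum_lower : ∑' k, (r / t) ^ k * x i = (1 - r / t)⁻¹ * x i := by
      rw [tsum_mul_right, tsum_geometric_of_lt_one (by positivity)
        (by rw [div_lt_one ht0]; exact hrt)]
      try ring
    have hbound : (1 - r / t)⁻¹ * x i ≤ su.mulVec x i := by
      rw [← htsum_lower]
      have : su.mulVec x i = ∑' k, entryCLM x i (x0 ^ k) := by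
        rw [← entryCLM_apply x i su, hsu, hφ]
      rw [this]
      exact hsummable_lower.tsum_le_tsum hle hsummable_upper
    have hmv : (t⁻¹ • su).mulVec x i = t⁻¹ * su.mulVec x i := by
      rw [Matrix.smul_mulVec]; rfl
    rw [hmv]
    have hcoef : x i * (t - r)⁻¹ = t⁻¹ * ((1 - r / t)⁻¹ * x i) := by
      field_simp
      try ring
    rw [hcoef]
    exact mul_le_mul_of_nonneg_left hbound (by positivity)







section Main

variable (A : Matrix (Fin m) (Fin m) ℝ) (r : ℝ)

lemma spectral_ub
    (hr : IsGreatest {x : ℝ | ∃ μ ∈ spectrum ℂ (A.map Complex.ofReal), x = ‖μ‖} r) :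
    spectralRadius ℂ (A.map Complex.ofReal) ≤ ENNReal.ofReal r := by
  rw [spectralRadius]
  refine iSup₂_le fun μ hμ => ?_
  rw [show (‖μ‖₊ : ENNReal) = ENNReal.ofReal ‖μ‖ from (ofReal_norm μ).symm]
  apply ENNReal.ofReal_le_ofReal
  have := hr.2 ⟨μ, hμ, rfl⟩
  simpa using this

lemma r_nonneg
    (hr : IsGreatest {x : ℝ | ∃ μ ∈ spectrum ℂ (A.map Complex.ofReal), x = ‖μ‖} r) :
    0 ≤ r := by
  obtain ⟨μ, _, hμeq⟩ := hr.1
  rw [hμeq]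
  exact norm_nonneg _

lemma exists_subinvariant_vec (hA : ∀ i j, 0 ≤ A i j)
    (hr : IsGreatest {x : ℝ | ∃ μ ∈ spectrum ℂ (A.map Complex.ofReal), x = ‖μ‖} r) :
    ∃ x : Fin m → ℝ, (∀ i, 0 ≤ x i) ∧ x ≠ 0 ∧ ∀ i, r * x i ≤ A.mulVec x i := by
  obtain ⟨μ, hμ, hμeq⟩ := hr.1
  rw [spectrum.mem_iff] at hμ
  have hdet : (μ • 1 - A.map Complex.ofReal).det = 0 := by
    by_contra hd
    exact hμ (by
      rw [Algebra.algebraMap_eq_smul_one]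
      rw [Matrix.isUnit_iff_isUnit_det]
      exact isUnit_iff_ne_zero.mpr hd)
  obtain ⟨v, hv0, hv⟩ := (Matrix.exists_mulVec_eq_zero_iff).mpr hdet
  have hAv : (A.map Complex.ofReal).mulVec v = μ • v := by
    have h1 : (μ • (1:Matrix (Fin m) (Fin m) ℂ) - A.map Complex.ofReal).mulVec v
        = μ • v - (A.map Complex.ofReal).mulVec v := by
      rw [Matrix.sub_mulVec, Matrix.smul_mulVec, Matrix.one_mulVec]
    rw [h1] at hv
    linear_combination (norm := module) -hv
  refine ⟨fun i => ‖v i‖, fun i => norm_nonneg _, ?_, ?_⟩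
  · intro hcon
    apply hv0
    funext i
    have : ‖v i‖ = 0 := congrFun hcon i
    exact norm_eq_zero.mp this
  · intro i
    have h2 : (A.map Complex.ofReal).mulVec v i = μ * v i := by
      rw [hAv]; rfl
    calc r * ‖v i‖ = ‖μ‖ * ‖v i‖ := by rw [hμeq]
      _ = ‖μ * v i‖ := (norm_mul _ _).symm
      _ = ‖∑ j, (A.map Complex.ofReal) i j * v j‖ := by
          rw [← h2]; rfl
      _ ≤ ∑ j, ‖(A.map Complex.ofReal) i j * v j‖ :=
          norm_sum_le _ _
      _ = ∑ j, A i j * ‖v j‖ := by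
          apply Finset.sum_congr rfl
          intro j _
          rw [norm_mul, Matrix.map_apply, Complex.norm_real, Real.norm_of_nonneg (hA i j)]
      _ = A.mulVec (fun j => ‖v j‖) i := rfl

lemma r_mem_spectrum (hm : 0 < m) (hA : ∀ i j, 0 ≤ A i j)
    (hr : IsGreatest {x : ℝ | ∃ μ ∈ spectrum ℂ (A.map Complex.ofReal), x = ‖μ‖} r) :
    r ∈ spectrum ℝ A := by
  haveI : CompleteSpace (Matrix (Fin m) (Fin m) ℝ) := FiniteDimensional.complete ℝ _
  have hr0 := r_nonneg A r hr
  have hub := spectral_ub A r hr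
  obtain ⟨x, hx, hx0, hAx⟩ := exists_subinvariant_vec A r hA hr
  by_contra hns
  rw [spectrum.notMem_iff] at hns
  rw [Algebra.algebraMap_eq_smul_one] at hns
  -- hns : IsUnit (r • 1 - A)
  obtain ⟨u, hu⟩ := hns
  set φ : ℝ → Matrix (Fin m) (Fin m) ℝ := fun t => Ring.inverse (t • 1 - A) with hφdef
  have hg : Continuous fun t : ℝ => t • (1 : Matrix (Fin m) (Fin m) ℝ) - A :=
    (continuous_id.smul continuous_const).sub continuous_const
  have hφcont : ContinuousAt φ r := by
    have h1 : ContinuousAt Ring.inverse ((r • (1: Matrix (Fin m) (Fin m) ℝ) - A)) := by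
      rw [← hu]
      exact NormedRing.inverse_continuousAt u
    exact ContinuousAt.comp (g := Ring.inverse)
      (f := fun t : ℝ => t • (1:Matrix (Fin m) (Fin m) ℝ) - A) h1 hg.continuousAt
  set t : ℕ → ℝ := fun n => r + (1:ℝ)/(n+1) with htdef
  have htr : ∀ n, r < t n := fun n => by
    rw [htdef]
    simp only [lt_add_iff_pos_right]
    positivity
  have htt : Tendsto t atTop (nhds r) := by
    rw [htdef]
    have := tendsto_one_div_add_atTop_nhds_zero_nat (𝕜 := ℝ)
    simpa using (tendsto_const_nhds (x := r)).add this
  have hSn : ∀ n : ℕ, ∃ S : Matrix (Fin m) (Fin m) ℝ,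
      (t n • 1 - A) * S = 1 ∧ S * (t n • 1 - A) = 1 ∧ (∀ i j, 0 ≤ S i j) ∧
      ∀ y : Fin m → ℝ, (∀ i, 0 ≤ y i) → (∀ i, r * y i ≤ A.mulVec y i) →
        ∀ i, y i * (t n - r)⁻¹ ≤ S.mulVec y i :=
    fun n => resolvent A hA r (t n) hr0 (htr n) hub
  choose S hS1 hS2 hS3 hS4 using hSn
  have hφt : ∀ n, φ (t n) = S n := by
    intro n
    rw [hφdef]
    exact Ring.inverse_unit ⟨_, S n, hS1 n, hS2 n⟩
  obtain ⟨i0, hi0⟩ : ∃ i0, 0 < x i0 := by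
    by_contra hcon
    push_neg at hcon
    apply hx0
    funext i
    exact le_antisymm (hcon i) (hx i)
  have hlow : ∀ n : ℕ, x i0 * ((n:ℝ)+1) ≤ entryCLM x i0 (φ (t n)) := by
    intro n
    rw [hφt n, entryCLM_apply]
    have := hS4 n x hx hAx i0
    have ht1 : (t n - r)⁻¹ = (n:ℝ)+1 := by
      rw [htdef]
      simp only [add_sub_cancel_left]
      rw [one_div, inv_inv]
    rw [ht1] at this
    exact this
  have hconv : Tendsto (fun n => entryCLM x i0 (φ (t n))) atTop
      (nhds (entryCLM x i0 (φ r))) :=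
    ((entryCLM x i0).continuous.continuousAt.comp hφcont).tendsto.comp htt
  have hatTop : Tendsto (fun n : ℕ => x i0 * ((n:ℝ)+1)) atTop atTop := by
    apply Tendsto.const_mul_atTop hi0
    exact tendsto_atTop_add_const_right _ _ tendsto_natCast_atTop_atTop
  exact not_tendsto_atTop_of_tendsto_nhds hconv
    (tendsto_atTop_mono hlow hatTop)

end Main






lemma mulVecLin_pow (M : Matrix (Fin m) (Fin m) ℝ) (k : ℕ) :
    (M ^ k).mulVecLin = (M.mulVecLin) ^ k := by
  induction k with
  | zero => rw [pow_zero, pow_zero, Matrix.mulVecLin_one]; rfl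
  | succ n ih => rw [pow_succ, pow_succ, Matrix.mulVecLin_mul, ih]; rfl

lemma clm_isUnit {W : Type*} [NormedAddCommGroup W] [NormedSpace ℝ W] [FiniteDimensional ℝ W]
    (f : W →L[ℝ] W) (h : Function.Injective f) : IsUnit f := by
  have hsurj : Function.Surjective f :=
    (LinearMap.injective_iff_surjective (f := (f : W →ₗ[ℝ] W))).mp h
  let e : W ≃ₗ[ℝ] W := LinearEquiv.ofBijective (f : W →ₗ[ℝ] W) ⟨h, hsurj⟩
  let ec : W ≃L[ℝ] W := e.toContinuousLinearEquiv
  refine ⟨⟨f, (ec.symm : W →L[ℝ] W), ?_, ?_⟩, rfl⟩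
  · ext z
    have h1 : ((ec.symm : W →L[ℝ] W) z) = e.symm z := rfl
    show f ((ec.symm : W →L[ℝ] W) z) = z
    rw [h1]
    exact e.apply_symm_apply z
  · ext z
    show (ec.symm : W →L[ℝ] W) (f z) = z
    exact e.symm_apply_apply z

lemma part2 (A : Matrix (Fin m) (Fin m) ℝ) (hA : ∀ i j, 0 ≤ A i j) (r : ℝ)
    (hr0 : 0 ≤ r)
    (hub : spectralRadius ℂ (A.map Complex.ofReal) ≤ ENNReal.ofReal r)
    (ν : ℕ) (hν1 : 0 < ν)
    (hkill : ∀ x ∈ GEsub A r, ((A - r • 1) ^ ν).mulVec x = 0) :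
    ∃ b : Set (Fin m → ℝ), b ⊆ {x | ∀ i, 0 ≤ x i} ∧
      LinearIndependent ℝ (fun x : b => (x : Fin m → ℝ)) ∧
      Submodule.span ℝ b =
        Submodule.map (Matrix.mulVecLin ((A - r • 1) ^ (ν - 1))) (GEsub A r) := by
  classical
  haveI : CompleteSpace (Matrix (Fin m) (Fin m) ℝ) := FiniteDimensional.complete ℝ _
  set g : Module.End ℝ (Fin m → ℝ) := (A - r • 1).mulVecLin with hgdef
  obtain ⟨N0, hN0⟩ := Filter.eventually_atTop.mp (LinearMap.eventually_isCompl_ker_pow_range_pow g)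
  set n := max N0 (max (Module.finrank ℝ (Fin m → ℝ)) 1) with hndef
  have hc : IsCompl (LinearMap.ker (g ^ n)) (LinearMap.range (g ^ n)) := hN0 n (le_max_left _ _)
  have hn1 : 1 ≤ n := le_trans (le_max_right _ _) (le_max_right _ _)
  have hnfr : Module.finrank ℝ (Fin m → ℝ) ≤ n :=
    le_trans (le_max_left _ _) (le_max_right _ _)
  have hpow : ∀ k : ℕ, ((A - r • 1) ^ k).mulVecLin = g ^ k := fun k => mulVecLin_pow _ k
  have happly : ∀ (k : ℕ) (y : Fin m → ℝ), ((A - r • 1) ^ k).mulVec y = (g ^ k) y := by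
    intro k y
    rw [← hpow k]
    rfl
  have hKG : GEsub A r = LinearMap.ker (g ^ n) := by
    ext y
    constructor
    · rintro ⟨k, hk, h0⟩
      have h1 : y ∈ LinearMap.ker (g ^ k) := by
        rw [LinearMap.mem_ker, ← happly k y]; exact h0
      have h2 := Module.End.ker_pow_le_ker_pow_finrank g k h1
      rwa [← Module.End.ker_pow_eq_ker_pow_finrank_of_le hnfr] at h2
    · intro hy
      exact ⟨n, hn1, by rw [happly n y]; exact hy⟩
  set K := LinearMap.ker (g ^ n) with hKdef
  set W := LinearMap.range (g ^ n) with hWdef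
  -- invariance of W under A
  have hcm : Commute A ((A - r • 1) ^ n) :=
    (Commute.sub_right (Commute.refl A) (Commute.smul_right (Commute.one_right A) r)).pow_right n
  have hcomm : ∀ y : Fin m → ℝ, A.mulVecLin ((g ^ n) y) = (g ^ n) (A.mulVecLin y) := by
    intro y
    have h1 := congrArg Matrix.mulVecLin hcm.eq
    rw [Matrix.mulVecLin_mul, Matrix.mulVecLin_mul, hpow n] at h1
    exact LinearMap.congr_fun h1 y
  have hWinv : ∀ z ∈ W, A.mulVecLin z ∈ W := by
    rintro z ⟨y, rfl⟩
    exact ⟨A.mulVecLin y, (hcomm y).symm⟩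
  haveI : CompleteSpace W := FiniteDimensional.complete ℝ _
  haveI : IsTopologicalAddGroup (W →L[ℝ] W) := by infer_instance
  haveI : ContinuousSub (W →L[ℝ] W) :=
    ⟨(@continuous_sub (W →L[ℝ] W) _ _ (@IsTopologicalAddGroup.to_continuousSub (W →L[ℝ] W) _ _ inferInstance) :)⟩
  set B0 : W →ₗ[ℝ] W := A.mulVecLin.restrict hWinv with hB0def
  set Bc : W →L[ℝ] W := LinearMap.toContinuousLinearMap B0 with hBcdef
  have hTc : ∀ (τ : ℝ) (z : W),
      (((τ • (1 : W →L[ℝ] W) - Bc) z : W) : Fin m → ℝ) = (τ • 1 - A).mulVec (z : Fin m → ℝ) := by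
    intro τ z
    have h1 : ((τ • (1 : W →L[ℝ] W) - Bc) z : W) = τ • z - Bc z := by
      simp
    have h2 : ((Bc z : W) : Fin m → ℝ) = A.mulVec (z : Fin m → ℝ) := rfl
    rw [h1, Submodule.coe_sub, Submodule.coe_smul, h2, Matrix.sub_mulVec,
      Matrix.smul_mulVec, Matrix.one_mulVec]
  -- injectivity facts
  have hker_le : ∀ z : Fin m → ℝ, g z = 0 → z ∈ K := by
    intro z hz
    have h1 : g ^ n = g ^ (n - 1) * g := by
      conv_lhs => rw [← Nat.sub_add_cancel hn1]
      rw [pow_succ]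
    rw [hKdef, LinearMap.mem_ker, h1, Module.End.mul_apply, hz, map_zero]
  have hTcr_unit : IsUnit (r • (1 : W →L[ℝ] W) - Bc) := by
    apply clm_isUnit
    have hker : ∀ z : W, (r • (1 : W →L[ℝ] W) - Bc) z = 0 → z = 0 := by
      intro z hz
      have h1 : (r • 1 - A).mulVec (z : Fin m → ℝ) = 0 := by
        rw [← hTc r z, hz, Submodule.coe_zero]
      have h2 : g (z : Fin m → ℝ) = 0 := by
        have : (A - r • 1).mulVec (z : Fin m → ℝ) = - ((r • 1 - A).mulVec (z : Fin m → ℝ)) := by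
          rw [← Matrix.neg_mulVec, neg_sub]
        rw [hgdef]
        show (A - r • 1).mulVec (z : Fin m → ℝ) = 0
        rw [this, h1, neg_zero]
      have h3 : (z : Fin m → ℝ) ∈ K := hker_le _ h2
      have h4 : (z : Fin m → ℝ) ∈ W := z.2
      have h5 : (z : Fin m → ℝ) = 0 := Submodule.disjoint_def.mp hc.disjoint _ h3 h4
      exact Subtype.ext h5
    intro z1 z2 h12
    have := hker (z1 - z2) (by rw [map_sub, h12, sub_self])
    exact sub_eq_zero.mp this
  have hTct_unit : ∀ τ : ℝ, IsUnit (τ • (1 : Matrix (Fin m) (Fin m) ℝ) - A) →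
      IsUnit (τ • (1 : W →L[ℝ] W) - Bc) := by
    intro τ hτ
    apply clm_isUnit
    have hker : ∀ z : W, (τ • (1 : W →L[ℝ] W) - Bc) z = 0 → z = 0 := by
      intro z hz
      have h1 : (τ • 1 - A).mulVec (z : Fin m → ℝ) = 0 := by
        rw [← hTc τ z, hz, Submodule.coe_zero]
      obtain ⟨u, hu⟩ := hτ
      have h2 : (z : Fin m → ℝ) = 0 := by
        have h3 : ((↑u⁻¹ : Matrix (Fin m) (Fin m) ℝ) * (τ • 1 - A)).mulVec (z : Fin m → ℝ) = 0 := by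
          rw [← Matrix.mulVec_mulVec, h1, Matrix.mulVec_zero]
        rw [← hu, Units.inv_mul, Matrix.one_mulVec] at h3
        exact h3
      exact Subtype.ext h2
    intro z1 z2 h12
    have := hker (z1 - z2) (by rw [map_sub, h12, sub_self])
    exact sub_eq_zero.mp this
  -- the resolvent on W
  set ψ : ℝ → (W →L[ℝ] W) := fun τ => Ring.inverse (τ • (1 : W →L[ℝ] W) - Bc) with hψdef
  have hψcont : ContinuousAt ψ r := by
    obtain ⟨u, hu⟩ := hTcr_unit
    have h1 : ContinuousAt Ring.inverse (r • (1 : W →L[ℝ] W) - Bc) := by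
      rw [← hu]
      exact @NormedRing.inverse_continuousAt (W →L[ℝ] W) _ _ u
    have hg2 : Continuous fun τ : ℝ => τ • (1 : W →L[ℝ] W) - Bc :=
      (continuous_id.smul (continuous_const (y := (1 : W →L[ℝ] W)))).sub (continuous_const (y := Bc))
    exact ContinuousAt.comp (g := Ring.inverse)
      (f := fun τ : ℝ => τ • (1 : W →L[ℝ] W) - Bc) h1 hg2.continuousAt
  -- the sequence of resolvents
  set t : ℕ → ℝ := fun k => r + (1:ℝ)/(k+1) with htdef
  have htr : ∀ k, r < t k := fun k => by
    rw [htdef]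
    simp only [lt_add_iff_pos_right]
    positivity
  have htt : Tendsto t atTop (nhds r) := by
    rw [htdef]
    have := tendsto_one_div_add_atTop_nhds_zero_nat (𝕜 := ℝ)
    simpa using (tendsto_const_nhds (x := r)).add this
  have hSk : ∀ k : ℕ, ∃ S : Matrix (Fin m) (Fin m) ℝ,
      (t k • 1 - A) * S = 1 ∧ S * (t k • 1 - A) = 1 ∧ (∀ i j, 0 ≤ S i j) ∧
      ∀ y : Fin m → ℝ, (∀ i, 0 ≤ y i) → (∀ i, r * y i ≤ A.mulVec y i) →
        ∀ i, y i * (t k - r)⁻¹ ≤ S.mulVec y i :=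
    fun k => resolvent A hA r (t k) hr0 (htr k) hub
  choose S hS1 hS2 hS3 _hS4 using hSk
  have hunit_tk : ∀ k, IsUnit (t k • (1 : Matrix (Fin m) (Fin m) ℝ) - A) :=
    fun k => ⟨⟨_, S k, hS1 k, hS2 k⟩, rfl⟩
  -- the resolvent on W agrees with S
  have hSW : ∀ (k : ℕ) (z0 : W), (S k).mulVec (z0 : Fin m → ℝ) = ((ψ (t k) z0 : W) : Fin m → ℝ) := by
    intro k z0
    set F : W →L[ℝ] W := t k • (1 : W →L[ℝ] W) - Bc with hFdef
    have hFu : IsUnit F := hTct_unit (t k) (hunit_tk k)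
    set y : W := ψ (t k) z0 with hydef
    have hFy : F y = z0 := by
      have h1 := congrArg (fun G : W →L[ℝ] W => G z0) (Ring.mul_inverse_cancel F hFu)
      simpa [ContinuousLinearMap.mul_apply] using h1
    have h2 : (z0 : Fin m → ℝ) = (t k • 1 - A).mulVec (y : Fin m → ℝ) := by
      rw [← hTc (t k) y, hFy]
    rw [h2, Matrix.mulVec_mulVec, hS2 k, Matrix.one_mulVec]
  -- limit on W
  have hWlim : ∀ z0 : W, Tendsto (fun k => (t k - r) ^ ν • (S k).mulVec (z0 : Fin m → ℝ))
      atTop (nhds 0) := by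
    intro z0
    have hscal : Tendsto (fun k => (t k - r) ^ ν) atTop (nhds 0) := by
      have h1 : Tendsto (fun k => t k - r) atTop (nhds 0) := by
        simpa using htt.sub_const r
      have h2 := h1.pow ν
      rwa [zero_pow hν1.ne'] at h2
    have hev : Continuous (fun F : W →L[ℝ] W => F z0) := by fun_prop
    have hvec : Tendsto (fun k => ((ψ (t k) z0 : W) : Fin m → ℝ)) atTop
        (nhds ((ψ r z0 : W) : Fin m → ℝ)) := by
      have h3 : Tendsto (fun k => ψ (t k)) atTop (nhds (ψ r)) := hψcont.tendsto.comp htt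
      have h4 : Tendsto (fun k => ψ (t k) z0) atTop (nhds (ψ r z0)) :=
        (hev.continuousAt.tendsto).comp h3
      exact (continuous_subtype_val.continuousAt.tendsto).comp h4
    have h5 : Tendsto (fun k => (t k - r) ^ ν • ((ψ (t k) z0 : W) : Fin m → ℝ)) atTop
        (nhds ((0:ℝ) • ((ψ r z0 : W) : Fin m → ℝ))) := hscal.smul hvec
    rw [zero_smul] at h5
    convert h5 using 2 with k
    rw [hSW k z0]
  -- limit on the generalized eigenspace
  have hKlim : ∀ u ∈ GEsub A r,
      Tendsto (fun k => (t k - r) ^ ν • (S k).mulVec u) atTop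
        (nhds (((A - r • 1) ^ (ν - 1)).mulVec u)) := by
    intro u hu
    have hgu : ((A - r • 1) ^ ν).mulVec u = 0 := hkill u hu
    have hveq : ∀ k : ℕ, (S k).mulVec u =
        ∑ j ∈ Finset.range ν, ((t k - r)⁻¹) ^ (j + 1) • (((A - r • 1) ^ j).mulVec u) := by
      intro k
      set c : ℝ := t k - r with hcdef
      have hc0 : c ≠ 0 := ne_of_gt (sub_pos.mpr (htr k))
      set f : ℕ → (Fin m → ℝ) := fun j => (c⁻¹) ^ j • (((A - r • 1) ^ j).mulVec u) with hfdef
      set v : Fin m → ℝ := ∑ j ∈ Finset.range ν, (c⁻¹) ^ (j + 1) • (((A - r • 1) ^ j).mulVec u)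
        with hvdef
      have hsplit : (t k • (1 : Matrix (Fin m) (Fin m) ℝ) - A) = c • 1 - (A - r • 1) := by
        rw [hcdef, sub_smul]
        abel
      have happ2 : (t k • (1 : Matrix (Fin m) (Fin m) ℝ) - A).mulVec v = u := by
        rw [hsplit, Matrix.sub_mulVec]
        have hterm1 : (c • (1 : Matrix (Fin m) (Fin m) ℝ)).mulVec v
            = ∑ j ∈ Finset.range ν, f j := by
          rw [Matrix.smul_mulVec, Matrix.one_mulVec, hvdef, Finset.smul_sum]
          apply Finset.sum_congr rfl
          intro j _
          rw [smul_smul, hfdef]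
          congr 1
          rw [pow_succ' (c⁻¹) j, ← mul_assoc, mul_inv_cancel₀ hc0, one_mul]
        have hterm2 : (A - r • 1).mulVec v = ∑ j ∈ Finset.range ν, f (j + 1) := by
          rw [hvdef]
          have hlin : (A - r • 1).mulVec (∑ j ∈ Finset.range ν,
              (c⁻¹) ^ (j + 1) • (((A - r • 1) ^ j).mulVec u))
              = ∑ j ∈ Finset.range ν, (A - r • 1).mulVec
                ((c⁻¹) ^ (j + 1) • (((A - r • 1) ^ j).mulVec u)) :=
            map_sum (A - r • 1).mulVecLin _ _
          rw [hlin]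
          apply Finset.sum_congr rfl
          intro j _
          rw [Matrix.mulVec_smul, Matrix.mulVec_mulVec, ← pow_succ']
        rw [hterm1, hterm2, ← Finset.sum_sub_distrib, Finset.sum_range_sub' f ν]
        have hf0 : f 0 = u := by
          rw [hfdef]
          simp [Matrix.one_mulVec]
        have hfν : f ν = 0 := by
          rw [hfdef]
          simp only [hgu, smul_zero]
        rw [hf0, hfν, sub_zero]
      calc (S k).mulVec u = (S k).mulVec ((t k • 1 - A).mulVec v) := by rw [happ2]
        _ = ((S k) * (t k • 1 - A)).mulVec v := Matrix.mulVec_mulVec _ _ _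
        _ = v := by rw [hS2 k, Matrix.one_mulVec]
    have hveq2 : ∀ k : ℕ, (t k - r) ^ ν • (S k).mulVec u =
        ∑ j ∈ Finset.range ν, (t k - r) ^ (ν - 1 - j) • (((A - r • 1) ^ j).mulVec u) := by
      intro k
      set c : ℝ := t k - r with hcdef
      have hc0 : c ≠ 0 := ne_of_gt (sub_pos.mpr (htr k))
      rw [hveq k, Finset.smul_sum]
      apply Finset.sum_congr rfl
      intro j hj
      rw [Finset.mem_range] at hj
      rw [smul_smul]
      congr 1
      have hν2 : ν = (ν - 1 - j) + (j + 1) := by omega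
      calc c ^ ν * (c⁻¹) ^ (j + 1) = c ^ ((ν - 1 - j) + (j + 1)) * (c⁻¹) ^ (j + 1) := by
            rw [← hν2]
        _ = c ^ (ν - 1 - j) * (c ^ (j + 1) * (c⁻¹) ^ (j + 1)) := by rw [pow_add, mul_assoc]
        _ = c ^ (ν - 1 - j) := by
            rw [← mul_pow, mul_inv_cancel₀ hc0, one_pow, mul_one]
    set G : ℝ → (Fin m → ℝ) := fun s =>
      ∑ j ∈ Finset.range ν, (s - r) ^ (ν - 1 - j) • (((A - r • 1) ^ j).mulVec u) with hGdef
    have hGcont : Continuous G := by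
      apply continuous_finset_sum
      intro j _
      exact ((continuous_id.sub continuous_const).pow _).smul continuous_const
    have hGr : G r = ((A - r • 1) ^ (ν - 1)).mulVec u := by
      rw [hGdef]
      simp only [sub_self]
      rw [Finset.sum_eq_single (ν - 1)]
      · rw [Nat.sub_self, pow_zero, one_smul]
      · intro j hj hjne
        rw [Finset.mem_range] at hj
        have : 0 < ν - 1 - j := by omega
        rw [zero_pow this.ne', zero_smul]
      · intro hcon
        exfalso
        apply hcon
        rw [Finset.mem_range]
        omega
    have hfun : (fun k => (t k - r) ^ ν • (S k).mulVec u) = G ∘ t := by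
      funext k
      rw [hveq2 k]
      rfl
    rw [hfun, ← hGr]
    exact (hGcont.tendsto r).comp htt
  -- the projection and the limit endomorphism
  set P : (Fin m → ℝ) →ₗ[ℝ] (Fin m → ℝ) := K.subtype ∘ₗ K.linearProjOfIsCompl W hc with hPdef
  set Nend : (Fin m → ℝ) →ₗ[ℝ] (Fin m → ℝ) := ((A - r • 1) ^ (ν - 1)).mulVecLin ∘ₗ P with hNdef
  have hNlim : ∀ y : Fin m → ℝ,
      Tendsto (fun k => (t k - r) ^ ν • (S k).mulVec y) atTop (nhds (Nend y)) := by
    intro y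
    have hy : y ∈ K ⊔ W := by rw [hc.codisjoint.eq_top]; trivial
    obtain ⟨u, hu, w, hw, huw⟩ := Submodule.mem_sup.mp hy
    have huG : u ∈ GEsub A r := by rw [hKG]; exact hu
    have hPy : P y = u := by
      have h1 : K.linearProjOfIsCompl W hc u = ⟨u, hu⟩ :=
        Submodule.linearProjOfIsCompl_apply_left hc ⟨u, hu⟩
      have h2 : K.linearProjOfIsCompl W hc w = 0 :=
        Submodule.linearProjOfIsCompl_apply_right hc ⟨w, hw⟩
      have h3 : P y = ↑(K.linearProjOfIsCompl W hc (u + w)) := by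
        rw [hPdef, ← huw]
        rfl
      rw [h3, map_add, h1, h2, add_zero]
    have hNy : Nend y = ((A - r • 1) ^ (ν - 1)).mulVec u := by
      rw [hNdef, LinearMap.comp_apply, hPy]
      rfl
    have hlim1 := hKlim u huG
    have hlim2 := hWlim ⟨w, hw⟩
    have hsplit2 : (fun k => (t k - r) ^ ν • (S k).mulVec y)
        = fun k => (t k - r) ^ ν • (S k).mulVec u + (t k - r) ^ ν • (S k).mulVec w := by
      funext k
      rw [← huw, Matrix.mulVec_add, smul_add]
    rw [hsplit2, hNy]
    have hcoe : ((⟨w, hw⟩ : W) : Fin m → ℝ) = w := rfl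
    rw [hcoe] at hlim2
    simpa using hlim1.add hlim2
  -- the limit matrix
  set Nmat := LinearMap.toMatrix' Nend with hNmatdef
  have hNend_eq : Nmat.mulVecLin = Nend := Matrix.toLin'_toMatrix' Nend
  have hNnonneg : ∀ i j, 0 ≤ Nmat i j := by
    intro i j
    set y : Fin m → ℝ := fun l => if l = j then 1 else 0 with hydef
    have h1 : Nmat i j = Nend y i := by
      rw [hNmatdef, LinearMap.toMatrix'_apply, hydef]
      rw [show (Pi.single j (1:ℝ) : Fin m → ℝ) = fun l => if l = j then 1 else 0 from by
        funext l; simp [Pi.single_apply]]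
    have h2 := hNlim y
    have h3 : Tendsto (fun k => ((t k - r) ^ ν • (S k).mulVec y) i) atTop (nhds (Nend y i)) :=
      ((continuous_apply i).continuousAt.tendsto).comp h2
    rw [h1]
    apply ge_of_tendsto' h3
    intro k
    have hsm : ((t k - r) ^ ν • (S k).mulVec y) i = (t k - r) ^ ν * ((S k).mulVec y i) := rfl
    rw [hsm]
    apply mul_nonneg (pow_nonneg (sub_pos.mpr (htr k)).le ν)
    have h4 : (S k).mulVec y i = ∑ l, S k i l * y l := rfl
    rw [h4]
    apply Finset.sum_nonneg
    intro l _
    apply mul_nonneg (hS3 k i l)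
    rw [hydef]
    by_cases hlj : l = j <;> simp [hlj]
  have hrange : LinearMap.range Nend
      = Submodule.map (((A - r • 1) ^ (ν - 1)).mulVecLin) (GEsub A r) := by
    rw [hNdef, LinearMap.range_comp]
    congr 1
    have hsurj : LinearMap.range (K.linearProjOfIsCompl W hc) = ⊤ := by
      rw [LinearMap.range_eq_top]
      intro x
      exact ⟨↑x, Submodule.linearProjOfIsCompl_apply_left hc x⟩
    rw [hPdef, LinearMap.range_comp, hsurj, Submodule.map_subtype_top, hKG]
  have hspan : Submodule.span ℝ (Set.range Nmatᵀ)
      = Submodule.map (((A - r • 1) ^ (ν - 1)).mulVecLin) (GEsub A r) := by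
    rw [show Set.range Nmatᵀ = Set.range Nmat.col from rfl, ← Matrix.range_mulVecLin, hNend_eq, hrange]
  obtain ⟨b, hbsub, hbspan, hbli⟩ := exists_linearIndependent ℝ (Set.range Nmatᵀ)
  refine ⟨b, ?_, hbli, ?_⟩
  · intro x hx i
    obtain ⟨j, rfl⟩ := hbsub hx
    rw [Matrix.transpose_apply]
    exact hNnonneg i j
  · rw [hbspan, hspan]


end Stmt9Aux

/-- If A (m ≥ 1) has nonnegative entries and spectral radius r, then r is an
eigenvalue of A and, for ν the cyclic order of GE_r(A), the dominant eigenspace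
(A − rI)^{ν−1}(GE_r(A)) has a basis consisting of nonnegative vectors. -/
theorem stmt9 {m : ℕ} (hm : 0 < m) (A : Matrix (Fin m) (Fin m) ℝ)
    (hA : ∀ i j, 0 ≤ A i j) (r : ℝ)
    (hr : IsGreatest {x : ℝ | ∃ μ ∈ spectrum ℂ (A.map Complex.ofReal), x = ‖μ‖} r) :
    r ∈ spectrum ℝ A ∧
    ∀ ν : ℕ, 0 < ν →
      (∀ x ∈ GEsub A r, ((A - r • 1) ^ ν).mulVec x = 0) →
      (∀ k : ℕ, 0 < k → (∀ x ∈ GEsub A r, ((A - r • 1) ^ k).mulVec x = 0) → ν ≤ k) →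
      ∃ b : Set (Fin m → ℝ), b ⊆ {x | ∀ i, 0 ≤ x i} ∧
        LinearIndependent ℝ (fun x : b => (x : Fin m → ℝ)) ∧
        Submodule.span ℝ b =
          Submodule.map (Matrix.mulVecLin ((A - r • 1) ^ (ν - 1))) (GEsub A r) := by
  constructor
  · exact Stmt9Aux.r_mem_spectrum A r hm hA hr
  · intro ν hν1 hkill _hmin
    exact Stmt9Aux.part2 A hA r (Stmt9Aux.r_nonneg A r hr) (Stmt9Aux.spectral_ub A r hr)
      ν hν1 hkill
end
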